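/- Let X₁, X₂, … be i.i.d. random variables with P(X₁ = 1) = 2/3 and P(X₁ = −2) = 1/3, and let S_t be the associated random walk. For every integer α ≥ 2 and every i ≥ 1 with P(𝔄_i(α)) > 0: conditionally on the event 𝔄_i(α), S_{t_i(α)−1} = α − 1 almost surely; moreover E[S_{τ₁(α)} | 𝔄₁(α)] > 0 and, when P(𝔄₂(α)) > 0, E[S_{τ₂(α)} | 𝔄₂(α)] = E[S_{τ₁(α)} | 𝔄₁(α)]. -/

import Mathlib

open MeasureTheory ProbabilityTheory Filter

noncomputable section

variable {Ω : Type*} [MeasurableSpace Ω]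

/-- Conditional expectation of `f` given the event `A`. -/
def cexp (μ : Measure Ω) (A : Set Ω) (f : Ω → ℝ) : ℝ :=
  (∫ ω in A, f ω ∂μ) / (μ A).toReal

/-- Partial sums of the steps: `pS X t = X 0 + ⋯ + X (t-1)`, i.e. the walk `S_t`, where
`X i` stands for the step `X_{i+1}` of the paper. -/
def pS (X : ℕ → Ω → ℝ) : ℕ → Ω → ℝ
  | 0 => fun _ => 0
  | (t + 1) => fun ω => pS X t ω + X t ω

/-- The stopping time `τ`: the first time `t > 1` with `S_t ≤ 0` if `X₁ > 0`, and `1`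
otherwise. -/
def tauRW (X : ℕ → Ω → ℝ) (ω : Ω) : ℕ∞ :=
  if 0 < X 0 ω then sInf {n : ℕ∞ | ∃ t : ℕ, n = (t : ℕ∞) ∧ 1 < t ∧ pS X t ω ≤ 0}
  else 1

/-- The number of level-crossings `L_α`: the number of `t ∈ {1, …, τ}` with
`S_{t-1} < α` and `S_t ≥ α`. -/
def nCross (X : ℕ → Ω → ℝ) (α : ℝ) (ω : Ω) : ℕ :=
  Set.ncard {t : ℕ | 1 ≤ t ∧ (t : ℕ∞) ≤ tauRW X ω ∧ pS X (t - 1) ω < α ∧ α ≤ pS X t ω}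

/-- The expected number of level-crossings `E L_α`. -/
def EL (μ : Measure Ω) (X : ℕ → Ω → ℝ) (α : ℝ) : ℝ :=
  ∫ ω, (nCross X α ω : ℝ) ∂μ

/-- The value `S_τ` of the walk at the stopping time (junk value `0` if `τ = ∞`). -/
def Stau (X : ℕ → Ω → ℝ) (ω : Ω) : ℝ :=
  pS X (tauRW X ω).toNat ω

/-- The pair `(t_i(α), τ_i(α))` of the `i`-th crossing time and the `i`-th descent time
(junk values given by `sInf ∅ = 0` when they do not exist). -/
def cdTimes (X : ℕ → Ω → ℝ) (α : ℝ) : ℕ → Ω → ℕ × ℕ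
  | 0 => fun _ => (0, 0)
  | (i + 1) => fun ω =>
      let t := sInf {t : ℕ | (cdTimes X α i ω).2 < t ∧ (t : ℕ∞) ≤ tauRW X ω ∧ α ≤ pS X t ω}
      (t, sInf {s : ℕ | t < s ∧ pS X s ω < α})

/-- The event `𝔄_i(α)`: the `i`-th crossing of the level `α` occurs during `[0, τ]`. -/
def crossEv (X : ℕ → Ω → ℝ) (α : ℝ) : ℕ → Set Ω
  | 0 => Set.univ
  | (i + 1) => crossEv X α i ∩
      {ω | ∃ t : ℕ, (cdTimes X α i ω).2 < t ∧ (t : ℕ∞) ≤ tauRW X ω ∧ α ≤ pS X t ω}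

/-- Assumption 1 of the paper at the level `α`: `P(𝔄₂(α)) > 0`,
`E[S_{t₁(α)-1} ∣ 𝔄₁(α)] > 0`, `E[S_{τ₁(α)} ∣ 𝔄₁(α)] > 0`,
`E[S_{t₂(α)-1} ∣ 𝔄₂(α)] = E[S_{t₁(α)-1} ∣ 𝔄₁(α)]` and
`E[S_{τ₂(α)} ∣ 𝔄₂(α)] = E[S_{τ₁(α)} ∣ 𝔄₁(α)]`. -/
def Assumption1 (μ : Measure Ω) (X : ℕ → Ω → ℝ) (α : ℝ) : Prop :=
  0 < μ (crossEv X α 2) ∧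
  0 < cexp μ (crossEv X α 1) (fun ω => pS X ((cdTimes X α 1 ω).1 - 1) ω) ∧
  0 < cexp μ (crossEv X α 1) (fun ω => pS X ((cdTimes X α 1 ω).2) ω) ∧
  cexp μ (crossEv X α 2) (fun ω => pS X ((cdTimes X α 2 ω).1 - 1) ω)
    = cexp μ (crossEv X α 1) (fun ω => pS X ((cdTimes X α 1 ω).1 - 1) ω) ∧
  cexp μ (crossEv X α 2) (fun ω => pS X ((cdTimes X α 2 ω).2) ω)
    = cexp μ (crossEv X α 1) (fun ω => pS X ((cdTimes X α 1 ω).2) ω)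

namespace S16
set_option linter.unusedSectionVars false

variable {Ω : Type*} [MeasurableSpace Ω]

variable (X : ℕ → Ω → ℝ)

/-- shifted partial sums -/
def pSh (j s : ℕ) (ω : Ω) : ℝ := ∑ i ∈ Finset.range s, X (j + i) ω

/-- the good set of step values -/
def NN : Set Ω := {ω | ∀ i, X i ω = 1 ∨ X i ω = -2}

/-- first descent time of the shifted walk below 0 (0 if none) -/
def fdT (j : ℕ) (ω : Ω) : ℕ := sInf {s : ℕ | 0 < s ∧ pSh X j s ω < 0}

/-- excursion end value functional -/
def g (A : ℝ) (j : ℕ) (ω : Ω) : ℝ :=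
  if fdT X j ω = 0 then 0 else A + pSh X j (fdT X j ω) ω

variable {X}

lemma pS_succ (t : ℕ) (ω : Ω) : pS X (t + 1) ω = pS X t ω + X t ω := rfl

lemma pS_eq_sum (t : ℕ) (ω : Ω) : pS X t ω = ∑ i ∈ Finset.range t, X i ω := by
  induction t with
  | zero => simp [pS]
  | succ t ih => rw [pS_succ, ih, Finset.sum_range_succ]

lemma pSh_zero (s : ℕ) (ω : Ω) : pSh X 0 s ω = pS X s ω := by
  simp [pSh, pS_eq_sum]

lemma pSh_succ (j s : ℕ) (ω : Ω) : pSh X j (s + 1) ω = pSh X j s ω + X (j + s) ω :=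
  Finset.sum_range_succ _ _

lemma pS_add (c s : ℕ) (ω : Ω) : pS X (c + s) ω = pS X c ω + pSh X c s ω := by
  induction s with
  | zero => simp [pSh]
  | succ s ih => rw [← add_assoc, pS_succ, ih, pSh_succ]; ring

lemma leTau_iff (t : ℕ) (ω : Ω) :
    ((t : ℕ∞) ≤ tauRW X ω) ↔
      (t ≤ 1 ∨ (0 < X 0 ω ∧ ∀ s : ℕ, 1 < s → s < t → 0 < pS X s ω)) := by
  unfold tauRW
  split_ifs with h
  · constructor
    · intro hle
      rcases le_or_gt t 1 with ht | ht
      · exact Or.inl ht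
      · refine Or.inr ⟨h, fun s hs1 hst => ?_⟩
        by_contra hns
        push_neg at hns
        have hmem : (s : ℕ∞) ∈ {n : ℕ∞ | ∃ t : ℕ, n = (t : ℕ∞) ∧ 1 < t ∧ pS X t ω ≤ 0} :=
          ⟨s, rfl, hs1, hns⟩
        have := le_trans hle (sInf_le hmem)
        exact absurd (Nat.cast_le.mp this) (not_le.mpr hst)
    · intro hor
      rcases hor with ht | ⟨-, hall⟩
      · calc (t : ℕ∞) ≤ (1 : ℕ) := Nat.cast_le.mpr ht
        _ ≤ _ := by
            refine le_sInf fun n hn => ?_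
            rcases hn with ⟨u, rfl, hu, -⟩
            exact_mod_cast hu.le
      · refine le_sInf fun n hn => ?_
        rcases hn with ⟨u, rfl, hu1, hu0⟩
        have : t ≤ u := by
          by_contra hc
          push_neg at hc
          exact absurd hu0 (not_le.mpr (hall u hu1 hc))
        exact_mod_cast this
  · push_neg at h
    constructor
    · intro hle
      have : t ≤ 1 := by exact_mod_cast hle
      exact Or.inl this
    · intro hor
      rcases hor with ht | ⟨hX, -⟩
      · exact_mod_cast ht
      · exact absurd hX (not_lt.mpr h)

lemma leTau_of_le {t u : ℕ} {ω : Ω} (h : (u : ℕ∞) ≤ tauRW X ω) (htu : t ≤ u) :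
    (t : ℕ∞) ≤ tauRW X ω :=
  le_trans (by exact_mod_cast htu) h

/-- The descent value at `cdTimes` is `< A` (or the time is `0` with value `0 < A`). -/
lemma snd_lt {A : ℝ} (hA : 0 < A) (i : ℕ) (ω : Ω) :
    pS X ((cdTimes X A i ω).2) ω < A := by
  cases i with
  | zero => simpa [cdTimes, pS] using hA
  | succ i =>
    show pS X (sInf {s : ℕ | (cdTimes X A (i+1) ω).1 < s ∧ pS X s ω < A}) ω < A
    rcases Set.eq_empty_or_nonempty {s : ℕ | (cdTimes X A (i+1) ω).1 < s ∧ pS X s ω < A}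
      with he | hne
    · rw [he, Nat.sInf_empty]
      simpa [pS] using hA
    · exact (Nat.sInf_mem hne).2

lemma mem_N_cases {ω : Ω} (hω : ω ∈ NN X) (i : ℕ) : X i ω = 1 ∨ X i ω = -2 := hω i

lemma exists_int_pSh {ω : Ω} (hω : ω ∈ NN X) (j s : ℕ) : ∃ z : ℤ, pSh X j s ω = z := by
  induction s with
  | zero => exact ⟨0, by simp [pSh]⟩
  | succ s ih =>
    obtain ⟨z, hz⟩ := ih
    rcases hω (j + s) with h | h
    · exact ⟨z + 1, by rw [pSh_succ, hz, h]; push_cast; ring⟩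
    · exact ⟨z - 2, by rw [pSh_succ, hz, h]; push_cast; ring⟩

lemma exists_int_pS {ω : Ω} (hω : ω ∈ NN X) (t : ℕ) : ∃ z : ℤ, pS X t ω = z := by
  rw [← pSh_zero]; exact exists_int_pSh hω 0 t

lemma fdT_mem {j : ℕ} {ω : Ω} (h : fdT X j ω ≠ 0) :
    0 < fdT X j ω ∧ pSh X j (fdT X j ω) ω < 0 := by
  have hne : {s : ℕ | 0 < s ∧ pSh X j s ω < 0}.Nonempty := by
    by_contra hc
    rw [Set.not_nonempty_iff_eq_empty] at hc
    exact h (by rw [fdT, hc, Nat.sInf_empty])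
  exact Nat.sInf_mem hne

lemma pSh_fdT_bound {j : ℕ} {ω : Ω} (hω : ω ∈ NN X) (h : fdT X j ω ≠ 0) :
    -2 ≤ pSh X j (fdT X j ω) ω ∧ pSh X j (fdT X j ω) ω < 0 := by
  obtain ⟨hpos, hlt⟩ := fdT_mem h
  refine ⟨?_, hlt⟩
  set D := fdT X j ω with hD
  have hprev : 0 ≤ pSh X j (D - 1) ω := by
    rcases Nat.eq_zero_or_pos (D - 1) with h0 | h0
    · simp [h0, pSh]
    · have hnm := Nat.notMem_of_lt_sInf (show D - 1 < sInf {s : ℕ | 0 < s ∧ pSh X j s ω < 0} by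
        rw [← fdT, ← hD]; omega)
      simp only [Set.mem_setOf_eq, not_and, not_lt] at hnm
      exact hnm h0
  have hstep : pSh X j D ω = pSh X j (D - 1) ω + X (j + (D - 1)) ω := by
    conv_lhs => rw [show D = (D - 1) + 1 by omega]
    exact pSh_succ _ _ _
  rcases hω (j + (D - 1)) with hx | hx <;> rw [hstep, hx] <;> linarith

lemma g_bounds {A : ℝ} (hA2 : 2 ≤ A) {ω : Ω} (hω : ω ∈ NN X) (j : ℕ) :
    0 ≤ g X A j ω ∧ g X A j ω ≤ A := by
  unfold g
  split_ifs with h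
  · constructor <;> linarith
  · obtain ⟨hlo, hhi⟩ := pSh_fdT_bound hω h
    constructor <;> linarith

/-- Structure of a genuine crossing. -/
lemma cross_struct {α : ℤ} (hα : 2 ≤ α) {ω : Ω} (hω : ω ∈ NN X) {i : ℕ}
    (hcr : ω ∈ crossEv X (α : ℝ) (i + 1)) :
    (cdTimes X (α : ℝ) i ω).2 < (cdTimes X (α : ℝ) (i + 1) ω).1 ∧
    2 ≤ (cdTimes X (α : ℝ) (i + 1) ω).1 ∧
    (((cdTimes X (α : ℝ) (i + 1) ω).1 : ℕ∞) ≤ tauRW X ω) ∧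
    pS X ((cdTimes X (α : ℝ) (i + 1) ω).1 - 1) ω = (α : ℝ) - 1 ∧
    pS X ((cdTimes X (α : ℝ) (i + 1) ω).1) ω = (α : ℝ) := by
  have hA0 : (0 : ℝ) < (α : ℝ) := by exact_mod_cast lt_of_lt_of_le (by norm_num) hα
  have hA2 : (2 : ℝ) ≤ (α : ℝ) := by exact_mod_cast hα
  set A := (α : ℝ) with hAdef
  set b := (cdTimes X A i ω).2 with hb
  have hset : {t : ℕ | b < t ∧ (t : ℕ∞) ≤ tauRW X ω ∧ A ≤ pS X t ω}.Nonempty := hcr.2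
  have hc_def : (cdTimes X A (i + 1) ω).1 =
      sInf {t : ℕ | b < t ∧ (t : ℕ∞) ≤ tauRW X ω ∧ A ≤ pS X t ω} := rfl
  set c := (cdTimes X A (i + 1) ω).1 with hc
  have hmem : b < c ∧ (c : ℕ∞) ≤ tauRW X ω ∧ A ≤ pS X c ω := by
    rw [hc_def]; exact Nat.sInf_mem hset
  obtain ⟨hbc, hctau, hSc⟩ := hmem
  -- S_{c-1} < A
  have hprev : pS X (c - 1) ω < A := by
    rcases eq_or_lt_of_le (show b ≤ c - 1 by omega) with heq | hlt
    · rw [← heq, hb]; exact snd_lt hA0 i ω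
    · have hnm := Nat.notMem_of_lt_sInf (show c - 1 < sInf {t : ℕ | b < t ∧
          (t : ℕ∞) ≤ tauRW X ω ∧ A ≤ pS X t ω} by rw [← hc_def]; omega)
      simp only [Set.mem_setOf_eq, not_and, not_le] at hnm
      exact hnm hlt (leTau_of_le hctau (by omega))
  have hc1 : 0 < c := by omega
  have hstep : pS X c ω = pS X (c - 1) ω + X (c - 1) ω := by
    conv_lhs => rw [show c = (c - 1) + 1 by omega]
    exact pS_succ _ _
  have hX1 : X (c - 1) ω = 1 := by
    rcases hω (c - 1) with hx | hx
    · exact hx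
    · exfalso; rw [hstep, hx] at hSc; linarith
  -- integrality
  obtain ⟨z, hz⟩ := exists_int_pS hω (c - 1)
  rw [hAdef] at hprev hSc hA2
  have hzlt : z < α := by exact_mod_cast hz ▸ hprev
  have hzge : α ≤ z + 1 := by
    have : (α : ℝ) ≤ (z : ℝ) + 1 := by rw [hstep, hX1, hz] at hSc; linarith
    exact_mod_cast this
  have hzeq : z = α - 1 := by omega
  have hSc1 : pS X (c - 1) ω = A - 1 := by rw [hAdef, hz, hzeq]; push_cast; ring
  have hSceq : pS X c ω = A := by rw [hstep, hSc1, hX1, hAdef]; ring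
  rw [hAdef] at hSceq
  -- 2 ≤ c
  have hc2 : 2 ≤ c := by
    by_contra hlt
    have hceq : c = 1 := by omega
    have h1 : pS X 1 ω = X 0 ω := by simp [pS]
    rw [hceq] at hSceq
    rcases hω 0 with hx | hx <;> rw [hSceq, hx] at h1 <;> linarith
  exact ⟨hbc, hc2, hctau, hSc1, by rw [hSceq, hAdef]⟩

/-- The descent value equals the excursion functional of the shifted walk. -/
lemma stau_eq_g {α : ℤ} (hα : 2 ≤ α) {ω : Ω} (hω : ω ∈ NN X) {i : ℕ}
    (hcr : ω ∈ crossEv X (α : ℝ) (i + 1)) :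
    pS X ((cdTimes X (α : ℝ) (i + 1) ω).2) ω
      = g X (α : ℝ) ((cdTimes X (α : ℝ) (i + 1) ω).1) ω := by
  obtain ⟨-, -, -, -, hSc⟩ := cross_struct hα hω hcr
  set A := (α : ℝ) with hAdef
  set c := (cdTimes X A (i + 1) ω).1 with hc
  have hsnd : (cdTimes X A (i + 1) ω).2 = sInf {s : ℕ | c < s ∧ pS X s ω < A} := rfl
  have hiff : ∀ u : ℕ, (c < c + u ∧ pS X (c + u) ω < A) ↔ (0 < u ∧ pSh X c u ω < 0) := by
    intro u
    rw [pS_add, hSc]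
    constructor
    · rintro ⟨h1, h2⟩; exact ⟨by omega, by linarith⟩
    · rintro ⟨h1, h2⟩; exact ⟨by omega, by linarith⟩
  by_cases hD : fdT X c ω = 0
  · -- no descent of the shifted walk : both sides are 0
    have hde : {s : ℕ | 0 < s ∧ pSh X c s ω < 0} = ∅ := by
      rw [Set.eq_empty_iff_forall_notMem]
      intro u hu
      have hmm : sInf {s : ℕ | 0 < s ∧ pSh X c s ω < 0} ∈ {s : ℕ | 0 < s ∧ pSh X c s ω < 0} :=
        Nat.sInf_mem ⟨u, hu⟩
      rw [show sInf {s : ℕ | 0 < s ∧ pSh X c s ω < 0} = fdT X c ω from rfl, hD] at hmm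
      exact absurd hmm.1 (lt_irrefl 0)
    have hse : {s : ℕ | c < s ∧ pS X s ω < A} = ∅ := by
      rw [Set.eq_empty_iff_forall_notMem]
      intro s hs
      have h1 : c < s := hs.1
      have : (0 < s - c ∧ pSh X c (s - c) ω < 0) := by
        have := (hiff (s - c)).mp (by rw [show c + (s - c) = s by omega]; exact hs)
        exact this
      rw [Set.eq_empty_iff_forall_notMem] at hde
      exact hde _ this
    rw [hsnd, hse, Nat.sInf_empty]
    simp [pS, g, hD]
  · obtain ⟨hDpos, hDlt⟩ := fdT_mem (X := X) hD
    set D := fdT X c ω with hDdef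
    have hmemS : c + D ∈ {s : ℕ | c < s ∧ pS X s ω < A} := (hiff D).mpr ⟨hDpos, hDlt⟩
    have hlb : ∀ s ∈ {s : ℕ | c < s ∧ pS X s ω < A}, c + D ≤ s := by
      intro s hs
      have h1 : c < s := hs.1
      have h2 : 0 < s - c ∧ pSh X c (s - c) ω < 0 :=
        (hiff (s - c)).mp (by rw [show c + (s - c) = s by omega]; exact hs)
      have := Nat.sInf_le (s := {s : ℕ | 0 < s ∧ pSh X c s ω < 0}) h2
      rw [← fdT, ← hDdef] at this
      omega
    have hsnd_eq : (cdTimes X A (i + 1) ω).2 = c + D := by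
      rw [hsnd]
      exact le_antisymm (Nat.sInf_le hmemS) (le_csInf ⟨_, hmemS⟩ hlb)
    rw [hsnd_eq, pS_add, hSc, g, ← hDdef, if_neg hD]

variable (X)

/-- first-crossing decomposition event -/
def E1 (A : ℝ) (c : ℕ) : Set Ω :=
  {ω | 0 < X 0 ω ∧ (∀ s, 1 < s → s < c → 0 < pS X s ω) ∧
    (∀ t, 0 < t → t < c → pS X t ω < A) ∧ A ≤ pS X c ω}

/-- second-crossing decomposition event -/
def E2 (A : ℝ) (a b c : ℕ) : Set Ω :=
  {ω | 0 < X 0 ω ∧ (∀ s, 1 < s → s < c → 0 < pS X s ω) ∧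
    (∀ t, 0 < t → t < a → pS X t ω < A) ∧ A ≤ pS X a ω ∧
    (∀ s, a < s → s < b → A ≤ pS X s ω) ∧ pS X b ω < A ∧
    (∀ t, b < t → t < c → pS X t ω < A) ∧ A ≤ pS X c ω}

/-- descents below `A` happen at all scales -/
def N2 (A : ℝ) : Set Ω := {ω | ∀ a : ℕ, ∃ s, a < s ∧ pS X s ω < A}

variable {X}

lemma abs_f_le {α : ℤ} (hα : 2 ≤ α) {ω : Ω} (hω : ω ∈ NN X) (i : ℕ) :
    |pS X ((cdTimes X (α : ℝ) i ω).2) ω| ≤ (α : ℝ) := by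
  have hA2 : (2 : ℝ) ≤ (α : ℝ) := by exact_mod_cast hα
  cases i with
  | zero =>
    have : pS X ((cdTimes X (α : ℝ) 0 ω).2) ω = 0 := by simp [cdTimes, pS]
    rw [this]; simp; linarith
  | succ i =>
    set A := (α : ℝ) with hAdef
    set c := (cdTimes X A (i + 1) ω).1 with hc
    have hsnd : (cdTimes X A (i + 1) ω).2 = sInf {s : ℕ | c < s ∧ pS X s ω < A} := rfl
    rcases Set.eq_empty_or_nonempty {s : ℕ | c < s ∧ pS X s ω < A} with he | hne
    · rw [hsnd, he, Nat.sInf_empty]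
      have : pS X 0 ω = 0 := rfl
      rw [this]; simp; linarith
    · have hmem := Nat.sInf_mem hne
      rw [hsnd]
      set s0 := sInf {s : ℕ | c < s ∧ pS X s ω < A} with hs0
      have hcs0 : c < s0 := hmem.1
      have hprev : 0 ≤ pS X (s0 - 1) ω := by
        rcases eq_or_lt_of_le (show c ≤ s0 - 1 by omega) with heq | hlt
        · rw [← heq]
          have hcdef : c = sInf {t : ℕ | (cdTimes X A i ω).2 < t ∧
              (t : ℕ∞) ≤ tauRW X ω ∧ A ≤ pS X t ω} := rfl
          rcases Set.eq_empty_or_nonempty {t : ℕ | (cdTimes X A i ω).2 < t ∧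
              (t : ℕ∞) ≤ tauRW X ω ∧ A ≤ pS X t ω} with hTe | hTne
          · rw [hcdef, hTe, Nat.sInf_empty]
            exact le_of_eq rfl
          · have hcm := Nat.sInf_mem hTne
            rw [← hcdef] at hcm
            linarith [hcm.2.2]
        · have hnm := Nat.notMem_of_lt_sInf (show s0 - 1 < sInf {s : ℕ | c < s ∧
              pS X s ω < A} by rw [← hs0]; omega)
          simp only [Set.mem_setOf_eq, not_and, not_lt] at hnm
          linarith [hnm hlt]
      have hstep : pS X s0 ω = pS X (s0 - 1) ω + X (s0 - 1) ω := by
        conv_lhs => rw [show s0 = (s0 - 1) + 1 by omega]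
        exact pS_succ _ _
      rw [abs_le]
      refine ⟨?_, le_of_lt (by linarith [hmem.2])⟩
      rcases hω (s0 - 1) with hx | hx <;> rw [hstep, hx] <;> linarith

lemma E1_spec {A : ℝ} {c : ℕ} (hc : 2 ≤ c) {ω : Ω} (hω : ω ∈ E1 X A c) :
    ω ∈ crossEv X A 1 ∧ (cdTimes X A 1 ω).1 = c := by
  obtain ⟨hX0, hpos, hlow, hSc⟩ := hω
  have hctau : (c : ℕ∞) ≤ tauRW X ω := (leTau_iff c ω).mpr (Or.inr ⟨hX0, hpos⟩)
  have h20 : (cdTimes X A 0 ω).2 = 0 := rfl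
  have hmemc : c ∈ {t : ℕ | (cdTimes X A 0 ω).2 < t ∧ (t : ℕ∞) ≤ tauRW X ω ∧
      A ≤ pS X t ω} := ⟨by omega, hctau, hSc⟩
  have hmin : ∀ t ∈ {t : ℕ | (cdTimes X A 0 ω).2 < t ∧ (t : ℕ∞) ≤ tauRW X ω ∧
      A ≤ pS X t ω}, c ≤ t := by
    intro t ht
    by_contra hlt
    push_neg at hlt
    rw [h20] at ht
    exact absurd ht.2.2 (not_le.mpr (hlow t ht.1 hlt))
  constructor
  · exact ⟨Set.mem_univ ω, ⟨c, hmemc⟩⟩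
  · exact le_antisymm (Nat.sInf_le hmemc) (le_csInf ⟨c, hmemc⟩ hmin)

lemma E1_of_cross {α : ℤ} (hα : 2 ≤ α) {ω : Ω} (hω : ω ∈ NN X)
    (hcr : ω ∈ crossEv X (α : ℝ) 1) :
    2 ≤ (cdTimes X (α : ℝ) 1 ω).1 ∧ ω ∈ E1 X (α : ℝ) ((cdTimes X (α : ℝ) 1 ω).1) := by
  obtain ⟨hbc, hc2, hctau, -, hSc⟩ := cross_struct hα hω (i := 0) hcr
  set A := (α : ℝ) with hAdef
  set c := (cdTimes X A 1 ω).1 with hc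
  have hXpos : 0 < X 0 ω ∧ ∀ s, 1 < s → s < c → 0 < pS X s ω := by
    rcases (leTau_iff c ω).mp hctau with h1 | h2
    · omega
    · exact h2
  refine ⟨hc2, hXpos.1, hXpos.2, ?_, hSc.ge⟩
  intro t ht0 htc
  have h20 : (cdTimes X A 0 ω).2 = 0 := rfl
  have hnm := Nat.notMem_of_lt_sInf (show t < sInf {t : ℕ | (cdTimes X A 0 ω).2 < t ∧
      (t : ℕ∞) ≤ tauRW X ω ∧ A ≤ pS X t ω} from htc)
  simp only [Set.mem_setOf_eq, not_and, not_le, h20] at hnm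
  exact hnm ht0 (leTau_of_le hctau htc.le)

lemma E2_spec {A : ℝ} {a b c : ℕ} (ha : 2 ≤ a) (hab : a < b) (hbc : b < c) {ω : Ω}
    (hω : ω ∈ E2 X A a b c) :
    ω ∈ crossEv X A 2 ∧ cdTimes X A 1 ω = (a, b) ∧ (cdTimes X A 2 ω).1 = c := by
  obtain ⟨hX0, hpos, hlow1, hSa, hmid, hSb, hlow2, hSc⟩ := hω
  have hctau : (c : ℕ∞) ≤ tauRW X ω := (leTau_iff c ω).mpr (Or.inr ⟨hX0, hpos⟩)
  have hatau : (a : ℕ∞) ≤ tauRW X ω := leTau_of_le hctau (by omega)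
  have h20 : (cdTimes X A 0 ω).2 = 0 := rfl
  -- first crossing time is a
  have hmema : a ∈ {t : ℕ | (cdTimes X A 0 ω).2 < t ∧ (t : ℕ∞) ≤ tauRW X ω ∧
      A ≤ pS X t ω} := ⟨by omega, hatau, hSa⟩
  have hfst1 : (cdTimes X A 1 ω).1 = a := by
    refine le_antisymm (Nat.sInf_le hmema) (le_csInf ⟨a, hmema⟩ ?_)
    intro t ht
    by_contra hlt
    push_neg at hlt
    rw [h20] at ht
    exact absurd ht.2.2 (not_le.mpr (hlow1 t ht.1 hlt))
  -- first descent time is b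
  have hsnd1 : (cdTimes X A 1 ω).2 = b := by
    have hrfl : (cdTimes X A 1 ω).2 = sInf {s : ℕ | (cdTimes X A 1 ω).1 < s ∧
        pS X s ω < A} := rfl
    rw [hrfl, hfst1]
    have hmemb : b ∈ {s : ℕ | a < s ∧ pS X s ω < A} := ⟨hab, hSb⟩
    refine le_antisymm (Nat.sInf_le hmemb) (le_csInf ⟨b, hmemb⟩ ?_)
    intro s hs
    by_contra hlt
    push_neg at hlt
    exact absurd hs.2 (not_lt.mpr (hmid s hs.1 hlt))
  have hpair : cdTimes X A 1 ω = (a, b) := Prod.ext hfst1 hsnd1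
  -- second crossing time is c
  have hmemc : c ∈ {t : ℕ | (cdTimes X A 1 ω).2 < t ∧ (t : ℕ∞) ≤ tauRW X ω ∧
      A ≤ pS X t ω} := ⟨by rw [hsnd1]; omega, hctau, hSc⟩
  have hfst2 : (cdTimes X A 2 ω).1 = c := by
    refine le_antisymm (Nat.sInf_le hmemc) (le_csInf ⟨c, hmemc⟩ ?_)
    intro t ht
    by_contra hlt
    push_neg at hlt
    rw [hsnd1] at ht
    exact absurd ht.2.2 (not_le.mpr (hlow2 t ht.1 hlt))
  have hcr1 : ω ∈ crossEv X A 1 := ⟨Set.mem_univ ω, ⟨a, hmema⟩⟩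
  exact ⟨⟨hcr1, ⟨c, hmemc⟩⟩, hpair, hfst2⟩

lemma E2_of_cross {α : ℤ} (hα : 2 ≤ α) {ω : Ω} (hω : ω ∈ NN X)
    (hN2 : ω ∈ N2 X (α : ℝ)) (hcr : ω ∈ crossEv X (α : ℝ) 2) :
    2 ≤ (cdTimes X (α : ℝ) 1 ω).1 ∧ (cdTimes X (α : ℝ) 1 ω).1 < (cdTimes X (α : ℝ) 1 ω).2 ∧
    (cdTimes X (α : ℝ) 1 ω).2 < (cdTimes X (α : ℝ) 2 ω).1 ∧
    ω ∈ E2 X (α : ℝ) ((cdTimes X (α : ℝ) 1 ω).1) ((cdTimes X (α : ℝ) 1 ω).2)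
      ((cdTimes X (α : ℝ) 2 ω).1) := by
  have hA0 : (0 : ℝ) < (α : ℝ) := by
    have : (2:ℝ) ≤ (α:ℝ) := by exact_mod_cast hα
    linarith
  obtain ⟨h0a, ha2, hatau, -, hSa⟩ := cross_struct hα hω (i := 0) hcr.1
  obtain ⟨hbc, hc2, hctau, -, hSc⟩ := cross_struct hα hω (i := 1) hcr
  set A := (α : ℝ) with hAdef
  set a := (cdTimes X A 1 ω).1 with hadef
  set b := (cdTimes X A 1 ω).2 with hbdef
  set c := (cdTimes X A 2 ω).1 with hcdef
  -- b is a genuine descent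
  have hbrfl : b = sInf {s : ℕ | a < s ∧ pS X s ω < A} := rfl
  have hbne : {s : ℕ | a < s ∧ pS X s ω < A}.Nonempty := hN2 a
  have hbmem : a < b ∧ pS X b ω < A := by rw [hbrfl]; exact Nat.sInf_mem hbne
  have hXpos : 0 < X 0 ω ∧ ∀ s, 1 < s → s < c → 0 < pS X s ω := by
    rcases (leTau_iff c ω).mp hctau with h1 | h2
    · omega
    · exact h2
  refine ⟨ha2, hbmem.1, hbc, hXpos.1, hXpos.2, ?_, hSa.ge, ?_, hbmem.2, ?_, hSc.ge⟩
  · -- low before a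
    intro t ht0 hta
    have h20 : (cdTimes X A 0 ω).2 = 0 := rfl
    have hnm := Nat.notMem_of_lt_sInf (show t < sInf {t : ℕ | (cdTimes X A 0 ω).2 < t ∧
        (t : ℕ∞) ≤ tauRW X ω ∧ A ≤ pS X t ω} from hta)
    simp only [Set.mem_setOf_eq, not_and, not_le, h20] at hnm
    exact hnm ht0 (leTau_of_le hatau hta.le)
  · -- high between a and b
    intro s has hsb
    have hnm := Nat.notMem_of_lt_sInf (show s < sInf {s : ℕ | a < s ∧ pS X s ω < A} by
      rw [← hbrfl]; exact hsb)
    simp only [Set.mem_setOf_eq, not_and, not_lt] at hnm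
    exact hnm has
  · -- low between b and c
    intro t htb htc
    have hnm := Nat.notMem_of_lt_sInf (show t < sInf {t : ℕ | (cdTimes X A 1 ω).2 < t ∧
        (t : ℕ∞) ≤ tauRW X ω ∧ A ≤ pS X t ω} from htc)
    simp only [Set.mem_setOf_eq, not_and, not_le] at hnm
    exact hnm (by rw [← hbdef]; exact htb) (leTau_of_le hctau htc.le)


variable (X)

/-- events: the shifted walk stays `≥ -k` during `[1,n]` -/
def ESn (j k n : ℕ) : Set Ω := {ω | ∀ s, 1 ≤ s → s ≤ n → -(k : ℝ) ≤ pSh X j s ω}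

/-- events: the shifted walk stays `≥ -k` forever -/
def ES (j k : ℕ) : Set Ω := {ω | ∀ s, 1 ≤ s → -(k : ℝ) ≤ pSh X j s ω}

variable {X}

section Meas

variable {m' : MeasurableSpace Ω}

lemma sInf_fiber_eq (S : Set ℕ) (d : ℕ) :
    sInf S = d ↔ ((d ∈ S ∧ ∀ s < d, s ∉ S) ∨ (d = 0 ∧ S = ∅)) := by
  constructor
  · intro h
    rcases Set.eq_empty_or_nonempty S with he | hne
    · right
      refine ⟨by rw [← h, he, Nat.sInf_empty], he⟩
    · left
      rw [← h]
      exact ⟨Nat.sInf_mem hne, fun s hs => Nat.notMem_of_lt_sInf hs⟩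
  · rintro (⟨hmem, hmin⟩ | ⟨rfl, rfl⟩)
    · refine le_antisymm (Nat.sInf_le hmem) (le_csInf ⟨d, hmem⟩ fun s hs => ?_)
      by_contra hc
      push_neg at hc
      exact hmin s hc hs
    · exact Nat.sInf_empty

lemma mble_sInf {Q : ℕ → Ω → Prop} (hQ : ∀ s, MeasurableSet[m'] {ω | Q s ω}) :
    Measurable[m'] (fun ω => sInf {s | Q s ω}) := by
  apply measurable_to_countable'
  intro d
  have heq : (fun ω => sInf {s | Q s ω}) ⁻¹' {d} =
      ({ω | Q d ω} ∩ ⋂ s, ⋂ _h : s < d, {ω | Q s ω}ᶜ) ∪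
      ({ω : Ω | d = 0} ∩ ⋂ s, {ω | Q s ω}ᶜ) := by
    ext ω
    simp only [Set.mem_preimage, Set.mem_singleton_iff, Set.mem_union, Set.mem_inter_iff,
      Set.mem_iInter, Set.mem_compl_iff, Set.mem_setOf_eq]
    rw [sInf_fiber_eq]
    constructor
    · rintro (⟨h1, h2⟩ | ⟨h1, h2⟩)
      · exact Or.inl ⟨h1, fun s hs => h2 s hs⟩
      · refine Or.inr ⟨h1, fun s => ?_⟩
        rw [Set.eq_empty_iff_forall_notMem] at h2
        exact h2 s
    · rintro (⟨h1, h2⟩ | ⟨h1, h2⟩)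
      · exact Or.inl ⟨h1, h2⟩
      · exact Or.inr ⟨h1, Set.eq_empty_iff_forall_notMem.mpr h2⟩
  rw [heq]
  have hd0 : MeasurableSet[m'] {ω : Ω | d = 0} := by
    by_cases h : d = 0 <;> simp [h]
  exact (((hQ d).inter (MeasurableSet.iInter fun s => MeasurableSet.iInter fun _ =>
    (hQ s).compl))).union (hd0.inter (MeasurableSet.iInter fun s => (hQ s).compl))

lemma mble_bind {F : ℕ → Ω → ℝ} (hF : ∀ d, Measurable[m'] (F d)) {D : Ω → ℕ}
    (hD : Measurable[m'] D) : Measurable[m'] (fun ω => F (D ω) ω) := by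
  intro s hs
  have heq : (fun ω => F (D ω) ω) ⁻¹' s = ⋃ d, (D ⁻¹' {d} ∩ F d ⁻¹' s) := by
    ext ω
    simp only [Set.mem_preimage, Set.mem_iUnion, Set.mem_inter_iff, Set.mem_singleton_iff]
    constructor
    · intro h; exact ⟨D ω, rfl, h⟩
    · rintro ⟨d, rfl, h⟩; exact h
  rw [heq]
  exact MeasurableSet.iUnion fun d => (hD (measurableSet_singleton d)).inter (hF d hs)

lemma mble_pS_of (c : ℕ) (h : ∀ i, i < c → Measurable[m'] (X i)) {t : ℕ} (ht : t ≤ c) :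
    Measurable[m'] (fun ω => pS X t ω) := by
  simp only [pS_eq_sum]
  exact Finset.measurable_sum _ (fun i hi => h i (by
    have := Finset.mem_range.mp hi; omega))

lemma mble_pSh_of (j : ℕ) (h : ∀ i, Measurable[m'] (X (j + i))) (s : ℕ) :
    Measurable[m'] (fun ω => pSh X j s ω) :=
  Finset.measurable_sum _ (fun i _ => h i)

lemma mble_fdT (j : ℕ) (h : ∀ i, Measurable[m'] (X (j + i))) :
    Measurable[m'] (fdT X j) := by
  apply mble_sInf
  intro s
  rcases Nat.eq_zero_or_pos s with h0 | h0
  · simp [h0]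
  · have : {ω | 0 < s ∧ pSh X j s ω < 0} = {ω | pSh X j s ω < 0} := by
      ext ω; simp [h0]
    rw [this]
    exact measurableSet_lt (mble_pSh_of j h s) measurable_const

lemma mble_g (A : ℝ) (j : ℕ) (h : ∀ i, Measurable[m'] (X (j + i))) :
    Measurable[m'] (g X A j) := by
  have : g X A j = fun ω => (fun d ω' => if d = 0 then (0:ℝ) else A + pSh X j d ω')
      (fdT X j ω) ω := rfl
  rw [this]
  refine mble_bind (F := fun d ω' => if d = 0 then (0:ℝ) else A + pSh X j d ω')
    (fun d => ?_) (mble_fdT j h)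
  by_cases hd : d = 0
  · simp only [hd, if_pos rfl]; exact measurable_const
  · simp only [if_neg hd]
    exact measurable_const.add (mble_pSh_of j h d)

lemma mble_forall {P : ℕ → Prop} {B : ℕ → Set Ω} (hB : ∀ t, P t → MeasurableSet[m'] (B t)) :
    MeasurableSet[m'] {ω : Ω | ∀ t, P t → ω ∈ B t} := by
  have : {ω : Ω | ∀ t, P t → ω ∈ B t} = ⋂ t, ⋂ _h : P t, B t := by
    ext ω; simp only [Set.mem_setOf_eq, Set.mem_iInter]
  rw [this]
  exact MeasurableSet.iInter fun t => MeasurableSet.iInter fun h => hB t h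

lemma mble_E1 (A : ℝ) {c : ℕ} (hc : 0 < c) (h : ∀ i, i < c → Measurable[m'] (X i)) :
    MeasurableSet[m'] (E1 X A c) := by
  have hpS : ∀ t, t ≤ c → Measurable[m'] (fun ω => pS X t ω) := fun t ht => mble_pS_of c h ht
  have h1 : MeasurableSet[m'] {ω : Ω | 0 < X 0 ω} :=
    measurableSet_lt measurable_const (h 0 hc)
  have h2 : MeasurableSet[m'] {ω : Ω | ∀ s, (1 < s ∧ s < c) → ω ∈ {ω : Ω | 0 < pS X s ω}} :=
    mble_forall fun s hs => measurableSet_lt measurable_const (hpS s hs.2.le)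
  have h3 : MeasurableSet[m'] {ω : Ω | ∀ t, (0 < t ∧ t < c) → ω ∈ {ω : Ω | pS X t ω < A}} :=
    mble_forall fun t ht => measurableSet_lt (hpS t ht.2.le) measurable_const
  have h4 : MeasurableSet[m'] {ω : Ω | A ≤ pS X c ω} :=
    measurableSet_le measurable_const (hpS c le_rfl)
  have heq : E1 X A c = {ω : Ω | 0 < X 0 ω} ∩
      {ω : Ω | ∀ s, (1 < s ∧ s < c) → ω ∈ {ω : Ω | 0 < pS X s ω}} ∩
      ({ω : Ω | ∀ t, (0 < t ∧ t < c) → ω ∈ {ω : Ω | pS X t ω < A}} ∩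
       {ω : Ω | A ≤ pS X c ω}) := by
    ext ω
    simp only [E1, Set.mem_setOf_eq, Set.mem_inter_iff, and_imp]
    tauto
  rw [heq]
  exact (h1.inter h2).inter (h3.inter h4)

lemma mble_E2 (A : ℝ) {a b c : ℕ} (hc : 0 < c) (hac : a ≤ c) (hbc : b ≤ c)
    (h : ∀ i, i < c → Measurable[m'] (X i)) :
    MeasurableSet[m'] (E2 X A a b c) := by
  have hpS : ∀ t, t ≤ c → Measurable[m'] (fun ω => pS X t ω) := fun t ht => mble_pS_of c h ht
  have h1 : MeasurableSet[m'] {ω : Ω | 0 < X 0 ω} :=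
    measurableSet_lt measurable_const (h 0 hc)
  have h2 : MeasurableSet[m'] {ω : Ω | ∀ s, (1 < s ∧ s < c) → ω ∈ {ω : Ω | 0 < pS X s ω}} :=
    mble_forall fun s hs => measurableSet_lt measurable_const (hpS s hs.2.le)
  have h3 : MeasurableSet[m'] {ω : Ω | ∀ t, (0 < t ∧ t < a) → ω ∈ {ω : Ω | pS X t ω < A}} :=
    mble_forall fun t ht => measurableSet_lt (hpS t (le_trans ht.2.le hac)) measurable_const
  have h4 : MeasurableSet[m'] {ω : Ω | A ≤ pS X a ω} :=
    measurableSet_le measurable_const (hpS a hac)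
  have h5 : MeasurableSet[m'] {ω : Ω | ∀ s, (a < s ∧ s < b) → ω ∈ {ω : Ω | A ≤ pS X s ω}} :=
    mble_forall fun s hs => measurableSet_le measurable_const
      (hpS s (le_trans hs.2.le hbc))
  have h6 : MeasurableSet[m'] {ω : Ω | pS X b ω < A} :=
    measurableSet_lt (hpS b hbc) measurable_const
  have h7 : MeasurableSet[m'] {ω : Ω | ∀ t, (b < t ∧ t < c) → ω ∈ {ω : Ω | pS X t ω < A}} :=
    mble_forall fun t ht => measurableSet_lt (hpS t ht.2.le) measurable_const
  have h8 : MeasurableSet[m'] {ω : Ω | A ≤ pS X c ω} :=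
    measurableSet_le measurable_const (hpS c le_rfl)
  have heq : E2 X A a b c = {ω : Ω | 0 < X 0 ω} ∩
      {ω : Ω | ∀ s, (1 < s ∧ s < c) → ω ∈ {ω : Ω | 0 < pS X s ω}} ∩
      ({ω : Ω | ∀ t, (0 < t ∧ t < a) → ω ∈ {ω : Ω | pS X t ω < A}} ∩
       {ω : Ω | A ≤ pS X a ω}) ∩
      ({ω : Ω | ∀ s, (a < s ∧ s < b) → ω ∈ {ω : Ω | A ≤ pS X s ω}} ∩
       {ω : Ω | pS X b ω < A}) ∩
      ({ω : Ω | ∀ t, (b < t ∧ t < c) → ω ∈ {ω : Ω | pS X t ω < A}} ∩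
       {ω : Ω | A ≤ pS X c ω}) := by
    ext ω
    simp only [E2, Set.mem_setOf_eq, Set.mem_inter_iff, and_imp]
    tauto
  rw [heq]
  exact (((h1.inter h2).inter (h3.inter h4)).inter (h5.inter h6)).inter (h7.inter h8)

lemma mble_leTau (h : ∀ i, Measurable[m'] (X i)) (t : ℕ) :
    MeasurableSet[m'] {ω : Ω | (t : ℕ∞) ≤ tauRW X ω} := by
  have heq : {ω : Ω | (t : ℕ∞) ≤ tauRW X ω} = {ω : Ω | t ≤ 1} ∪
      ({ω : Ω | 0 < X 0 ω} ∩
        {ω : Ω | ∀ s, (1 < s ∧ s < t) → ω ∈ {ω : Ω | 0 < pS X s ω}}) := by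
    ext ω
    simp only [Set.mem_setOf_eq, Set.mem_union, Set.mem_inter_iff, and_imp]
    rw [leTau_iff]
    try tauto
  rw [heq]
  have h1 : MeasurableSet[m'] {ω : Ω | t ≤ 1} := by
    by_cases ht : t ≤ 1 <;> simp [ht]
  exact h1.union ((measurableSet_lt measurable_const (h 0)).inter
    (mble_forall fun s hs => measurableSet_lt measurable_const
      (mble_pS_of t (fun i _ => h i) hs.2.le)))

lemma mble_cdTimes (A : ℝ) (h : ∀ i, Measurable[m'] (X i)) : ∀ i,
    Measurable[m'] (fun ω => (cdTimes X A i ω).1) ∧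
    Measurable[m'] (fun ω => (cdTimes X A i ω).2) := by
  have hpS : ∀ t, Measurable[m'] (fun ω => pS X t ω) :=
    fun t => mble_pS_of t (fun i _ => h i) le_rfl
  intro i
  induction i with
  | zero => exact ⟨measurable_const, measurable_const⟩
  | succ i ih =>
    have hfst : Measurable[m'] (fun ω => (cdTimes X A (i + 1) ω).1) := by
      have heq : (fun ω => (cdTimes X A (i + 1) ω).1) = fun ω =>
          sInf {t : ℕ | (cdTimes X A i ω).2 < t ∧ (t : ℕ∞) ≤ tauRW X ω ∧
            A ≤ pS X t ω} := rfl
      rw [heq]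
      refine mble_sInf fun t => ?_
      have e2 : {ω : Ω | (cdTimes X A i ω).2 < t ∧ (t : ℕ∞) ≤ tauRW X ω ∧ A ≤ pS X t ω} =
          ((fun ω => (cdTimes X A i ω).2) ⁻¹' (Set.Iio t)) ∩
          ({ω : Ω | (t : ℕ∞) ≤ tauRW X ω} ∩ {ω : Ω | A ≤ pS X t ω}) := by
        ext ω; simp only [Set.mem_setOf_eq, Set.mem_inter_iff, Set.mem_preimage, Set.mem_Iio]
        try tauto
      rw [e2]
      exact (ih.2 (by trivial)).inter ((mble_leTau h t).inter
        (measurableSet_le measurable_const (hpS t)))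
    refine ⟨hfst, ?_⟩
    have heq : (fun ω => (cdTimes X A (i + 1) ω).2) = fun ω =>
        sInf {s : ℕ | (cdTimes X A (i + 1) ω).1 < s ∧ pS X s ω < A} := rfl
    rw [heq]
    refine mble_sInf fun s => ?_
    have e2 : {ω : Ω | (cdTimes X A (i + 1) ω).1 < s ∧ pS X s ω < A} =
        ((fun ω => (cdTimes X A (i + 1) ω).1) ⁻¹' (Set.Iio s)) ∩
        {ω : Ω | pS X s ω < A} := by
      ext ω; simp [Set.mem_setOf_eq]
    rw [e2]
    exact (hfst (by trivial)).inter (measurableSet_lt (hpS s) measurable_const)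

lemma mble_crossEv (A : ℝ) (h : ∀ i, Measurable[m'] (X i)) : ∀ i,
    MeasurableSet[m'] (crossEv X A i) := by
  have hpS : ∀ t, Measurable[m'] (fun ω => pS X t ω) :=
    fun t => mble_pS_of t (fun i _ => h i) le_rfl
  intro i
  induction i with
  | zero => exact MeasurableSet.univ
  | succ i ih =>
    refine ih.inter ?_
    have heq : {ω : Ω | ∃ t : ℕ, (cdTimes X A i ω).2 < t ∧ (t : ℕ∞) ≤ tauRW X ω ∧
        A ≤ pS X t ω} = ⋃ t : ℕ, (((fun ω => (cdTimes X A i ω).2) ⁻¹' (Set.Iio t)) ∩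
        ({ω : Ω | (t : ℕ∞) ≤ tauRW X ω} ∩ {ω : Ω | A ≤ pS X t ω})) := by
      ext ω
      simp only [Set.mem_setOf_eq, Set.mem_iUnion, Set.mem_inter_iff, Set.mem_preimage,
        Set.mem_Iio]
      try tauto
    rw [heq]
    exact MeasurableSet.iUnion fun t => ((mble_cdTimes A h i).2 (by trivial)).inter
      ((mble_leTau h t).inter (measurableSet_le measurable_const (hpS t)))

lemma mble_stau (A : ℝ) (h : ∀ i, Measurable[m'] (X i)) (i : ℕ) :
    Measurable[m'] (fun ω => pS X ((cdTimes X A i ω).2) ω) :=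
  mble_bind (fun d => mble_pS_of d (fun i _ => h i) le_rfl) (mble_cdTimes A h i).2

lemma mble_NN (h : ∀ i, Measurable[m'] (X i)) : MeasurableSet[m'] (NN X) := by
  have : NN X = ⋂ i, ({ω : Ω | X i ω = 1} ∪ {ω : Ω | X i ω = -2}) := by
    ext ω; simp only [NN, Set.mem_setOf_eq, Set.mem_iInter, Set.mem_union]
  rw [this]
  exact MeasurableSet.iInter fun i =>
    ((h i) (measurableSet_singleton 1)).union ((h i) (measurableSet_singleton (-2)))

lemma mble_N2 (A : ℝ) (h : ∀ i, Measurable[m'] (X i)) : MeasurableSet[m'] (N2 X A) := by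
  have hpS : ∀ t, Measurable[m'] (fun ω => pS X t ω) :=
    fun t => mble_pS_of t (fun i _ => h i) le_rfl
  have : N2 X A = ⋂ a : ℕ, ⋃ s : ℕ, ⋃ _h : a < s, {ω : Ω | pS X s ω < A} := by
    ext ω
    simp only [N2, Set.mem_setOf_eq, Set.mem_iInter, Set.mem_iUnion]
    constructor
    · intro hω a; obtain ⟨s, h1, h2⟩ := hω a; exact ⟨s, h1, h2⟩
    · intro hω a; obtain ⟨s, h1, h2⟩ := hω a; exact ⟨s, h1, h2⟩
  rw [this]
  exact MeasurableSet.iInter fun a => MeasurableSet.iUnion fun s =>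
    MeasurableSet.iUnion fun _ => measurableSet_lt (hpS s) measurable_const

lemma mble_ES (j k : ℕ) (h : ∀ i, Measurable[m'] (X (j + i))) :
    MeasurableSet[m'] (ES X j k) := by
  have : ES X j k = {ω : Ω | ∀ s, (1 ≤ s) → ω ∈ {ω : Ω | -(k:ℝ) ≤ pSh X j s ω}} := rfl
  rw [this]
  exact mble_forall fun s _ => measurableSet_le measurable_const (mble_pSh_of j h s)

lemma mble_ESn (j k n : ℕ) (h : ∀ i, Measurable[m'] (X (j + i))) :
    MeasurableSet[m'] (ESn X j k n) := by
  have : ESn X j k n = {ω : Ω | ∀ s, (1 ≤ s ∧ s ≤ n) → ω ∈ {ω : Ω | -(k:ℝ) ≤ pSh X j s ω}} := by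
    ext ω; simp only [ESn, Set.mem_setOf_eq, and_imp]
  rw [this]
  exact mble_forall fun s _ => measurableSet_le measurable_const (mble_pSh_of j h s)

end Meas

section ProbBasic

open scoped ENNReal

def bval (b : Bool) : ℝ := if b then 1 else -2

def pbE (b : Bool) : ℝ≥0∞ := if b then 2/3 else 1/3

def pbR (b : Bool) : ℝ := if b then 2/3 else 1/3

lemma pbE_toReal (b : Bool) : (pbE b).toReal = pbR b := by
  cases b <;> simp [pbE, pbR] <;> norm_num

lemma pbE_ne_top (b : Bool) : pbE b ≠ ∞ := by
  cases b <;> simp [pbE, ENNReal.div_eq_top]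

lemma bval_injective : Function.Injective bval := by
  intro b b' h
  cases b <;> cases b' <;> simp [bval] at h ⊢ <;> norm_num at h

/-- coordinate value of a finite pattern, as a function on `ℕ` -/
def bnat {d : ℕ} (v : Fin d → Bool) (i : ℕ) : ℝ := if h : i < d then bval (v ⟨i, h⟩) else 0

/-- partial sums of a pattern -/
def bsum {d : ℕ} (v : Fin d → Bool) (s : ℕ) : ℝ := ∑ i ∈ Finset.range s, bnat v i

lemma bsum_succ {d : ℕ} (v : Fin d → Bool) (s : ℕ) :
    bsum v (s + 1) = bsum v s + bnat v s := Finset.sum_range_succ _ _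

variable (X) in
/-- the cylinder event where the steps `j, …, j+d-1` follow the pattern `v` -/
def Pev (j : ℕ) {d : ℕ} (v : Fin d → Bool) : Set Ω :=
  ⋂ i : Fin d, {ω | X (j + (i : ℕ)) ω = bval (v i)}

lemma mble_Pev {m' : MeasurableSpace Ω} (h : ∀ i, Measurable[m'] (X i)) (j : ℕ) {d : ℕ}
    (v : Fin d → Bool) : MeasurableSet[m'] (Pev X j v) :=
  MeasurableSet.iInter fun i => (h (j + i)) (measurableSet_singleton _)

lemma Pev_disj (j : ℕ) {d : ℕ} {v v' : Fin d → Bool} (hvv : v ≠ v') :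
    Pev X j v ∩ Pev X j v' = ∅ := by
  obtain ⟨i, hi⟩ := Function.ne_iff.mp hvv
  rw [Set.eq_empty_iff_forall_notMem]
  rintro ω ⟨h1, h2⟩
  have e1 : X (j + (i : ℕ)) ω = bval (v i) := by
    have := Set.mem_iInter.mp h1 i; exact this
  have e2 : X (j + (i : ℕ)) ω = bval (v' i) := by
    have := Set.mem_iInter.mp h2 i; exact this
  exact hi (bval_injective (e1 ▸ e2 ▸ rfl))

lemma exists_pattern {ω : Ω} (hω : ω ∈ NN X) (j d : ℕ) :
    ∃ v : Fin d → Bool, ω ∈ Pev X j v := by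
  classical
  refine ⟨fun i => if X (j + (i : ℕ)) ω = 1 then true else false, ?_⟩
  rw [Pev, Set.mem_iInter]
  intro i
  rcases hω (j + (i : ℕ)) with hx | hx
  · simp [hx, bval]
  · have hne : ¬ (X (j + (i : ℕ)) ω = 1) := by rw [hx]; norm_num
    show X (j + (i : ℕ)) ω = bval (if X (j + (i : ℕ)) ω = 1 then true else false)
    rw [if_neg hne]
    simpa [bval] using hx

lemma pSh_eq_bsum {ω : Ω} {j d : ℕ} {v : Fin d → Bool} (hω : ω ∈ Pev X j v) {s : ℕ}
    (hs : s ≤ d) : pSh X j s ω = bsum v s := by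
  induction s with
  | zero => simp [pSh, bsum]
  | succ s ih =>
    rw [pSh_succ, bsum_succ, ih (by omega)]
    congr 1
    have hmem := Set.mem_iInter.mp hω ⟨s, by omega⟩
    rw [bnat, dif_pos (show s < d by omega)]
    exact hmem

variable {μ : Measure Ω} [IsProbabilityMeasure μ]

lemma prob_val (hmeas : ∀ i, Measurable (X i)) (hident : ∀ i, IdentDistrib (X i) (X 0) μ μ)
    (i : ℕ) (r : ℝ) : μ {ω | X i ω = r} = μ {ω | X 0 ω = r} := by
  have := (hident i).measure_mem_eq (s := {r}) (measurableSet_singleton r)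
  exact this

lemma prob_bval (hmeas : ∀ i, Measurable (X i)) (hident : ∀ i, IdentDistrib (X i) (X 0) μ μ)
    (h1 : μ {ω | X 0 ω = 1} = 2 / 3) (h2 : μ {ω | X 0 ω = -2} = 1 / 3) (i : ℕ) (b : Bool) :
    μ {ω | X i ω = bval b} = pbE b := by
  rw [prob_val hmeas hident i]
  cases b
  · simpa [bval, pbE] using h2
  · simpa [bval, pbE] using h1

lemma prob_NN (hmeas : ∀ i, Measurable (X i)) (hident : ∀ i, IdentDistrib (X i) (X 0) μ μ)
    (h1 : μ {ω | X 0 ω = 1} = 2 / 3) (h2 : μ {ω | X 0 ω = -2} = 1 / 3) :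
    μ (NN X)ᶜ = 0 := by
  have hone : ∀ i : ℕ, μ ({ω | X i ω = 1} ∪ {ω | X i ω = -2}) = 1 := by
    intro i
    have hdis : Disjoint {ω : Ω | X i ω = 1} {ω | X i ω = -2} := by
      rw [Set.disjoint_iff_inter_eq_empty, Set.eq_empty_iff_forall_notMem]
      rintro ω ⟨ha, hb⟩
      simp only [Set.mem_setOf_eq] at ha hb
      rw [ha] at hb; norm_num at hb
    rw [measure_union hdis ((hmeas i) (measurableSet_singleton (-2))),
      prob_val hmeas hident i, prob_val hmeas hident i, h1, h2]
    have h31 : (2:ℝ≥0∞) + 1 = 3 := by norm_num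
    rw [ENNReal.div_add_div_same, h31]
    exact ENNReal.div_self (by norm_num) (by norm_num)
  have hcompl : ∀ i : ℕ, μ ({ω | X i ω = 1} ∪ {ω | X i ω = -2})ᶜ = 0 := by
    intro i
    have hms : MeasurableSet ({ω : Ω | X i ω = 1} ∪ {ω | X i ω = -2}) :=
      ((hmeas i) (measurableSet_singleton 1)).union ((hmeas i) (measurableSet_singleton (-2)))
    rw [measure_compl hms (measure_ne_top μ _), hone i, measure_univ, tsub_self]
  have : (NN X)ᶜ = ⋃ i, ({ω | X i ω = 1} ∪ {ω | X i ω = -2})ᶜ := by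
    ext ω
    simp only [NN, Set.mem_compl_iff, Set.mem_setOf_eq, Set.mem_iUnion, Set.mem_union,
      not_forall]
    try tauto
  rw [this]
  exact measure_iUnion_null fun i => hcompl i

lemma ae_NN (hmeas : ∀ i, Measurable (X i)) (hident : ∀ i, IdentDistrib (X i) (X 0) μ μ)
    (h1 : μ {ω | X 0 ω = 1} = 2 / 3) (h2 : μ {ω | X 0 ω = -2} = 1 / 3) :
    ∀ᵐ ω ∂μ, ω ∈ NN X := by
  rw [ae_iff]
  exact prob_NN hmeas hident h1 h2

lemma meas_Pev (hmeas : ∀ i, Measurable (X i))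
    (hindep : iIndepFun X μ)
    (hident : ∀ i, IdentDistrib (X i) (X 0) μ μ)
    (h1 : μ {ω | X 0 ω = 1} = 2 / 3) (h2 : μ {ω | X 0 ω = -2} = 1 / 3)
    (j : ℕ) {d : ℕ} (v : Fin d → Bool) :
    μ (Pev X j v) = ∏ i : Fin d, pbE (v i) := by
  classical
  set s : ℕ → Set Ω := fun n =>
    if h : j ≤ n ∧ n - j < d then {ω | X n ω = bval (v ⟨n - j, h.2⟩)} else Set.univ with hs
  have hseq : ∀ (i : ℕ) (hi : i < d), s (j + i) = {ω | X (j + i) ω = bval (v ⟨i, hi⟩)} := by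
    intro i hi
    have hcond : j ≤ j + i ∧ (j + i) - j < d := ⟨Nat.le_add_right _ _, by omega⟩
    rw [hs]
    simp only []
    rw [dif_pos hcond]
    have : (⟨j + i - j, hcond.2⟩ : Fin d) = ⟨i, hi⟩ := by
      apply Fin.ext; simp
    rw [this]
  set S : Finset ℕ := Finset.image (fun i => j + i) (Finset.range d) with hS
  have hinj : Set.InjOn (fun i => j + i) (Finset.range d) := fun a _ b _ h => by simpa using h
  have hbi : (⋂ n ∈ S, s n) = Pev X j v := by
    ext ω
    simp only [Set.mem_iInter, hS, Finset.mem_image, Finset.mem_range, Pev]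
    constructor
    · intro h i
      have := h (j + (i : ℕ)) ⟨(i : ℕ), i.2, rfl⟩
      rw [hseq (i : ℕ) i.2] at this
      simpa using this
    · rintro h n ⟨i, hi, rfl⟩
      rw [hseq i hi]
      simpa using h ⟨i, hi⟩
  have hmm : ∀ n ∈ S, MeasurableSet[MeasurableSpace.comap (X n) inferInstance] (s n) := by
    rintro n hn
    rw [hS, Finset.mem_image] at hn
    obtain ⟨i, hi, rfl⟩ := hn
    rw [Finset.mem_range] at hi
    rw [hseq i hi]
    exact ⟨{bval (v ⟨i, hi⟩)}, measurableSet_singleton _, rfl⟩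
  have hprod := hindep.meas_biInter (S := S) hmm
  rw [hbi] at hprod
  rw [hprod, hS, Finset.prod_image hinj]
  rw [← Fin.prod_univ_eq_prod_range (fun i => μ (s (j + i))) d]
  apply Finset.prod_congr rfl
  intro i _
  rw [hseq (i : ℕ) i.2]
  have : (⟨(i : ℕ), i.2⟩ : Fin d) = i := by apply Fin.ext; rfl
  rw [this]
  exact prob_bval hmeas hident h1 h2 _ _

end ProbBasic

section Recurrence

variable {μ : Measure Ω} [IsProbabilityMeasure μ]

open Classical in
lemma meas_of_pattern (hmeas : ∀ i, Measurable (X i))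
    (hindep : iIndepFun X μ)
    (hident : ∀ i, IdentDistrib (X i) (X 0) μ μ)
    (h1 : μ {ω | X 0 ω = 1} = 2 / 3) (h2 : μ {ω | X 0 ω = -2} = 1 / 3)
    (j d : ℕ) (B : Set Ω) (P : (Fin d → Bool) → Prop)
    (hB : ∀ (v : Fin d → Bool), ∀ ω ∈ NN X, ω ∈ Pev X j v → (ω ∈ B ↔ P v)) :
    μ B = ∑ v : Fin d → Bool, if P v then ∏ i, pbE (v i) else 0 := by
  have hae := ae_NN hmeas hident h1 h2
  have hBN : μ B = μ (B ∩ NN X) := by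
    apply measure_congr
    filter_upwards [hae] with ω hω
    simp only [eq_iff_iff, Set.mem_inter_iff]
    exact ⟨fun h => ⟨h, hω⟩, fun h => h.1⟩
  have hunion : B ∩ NN X = ⋃ v ∈ Finset.univ.filter P, (Pev X j v ∩ NN X) := by
    ext ω
    simp only [Set.mem_inter_iff, Set.mem_iUnion, Finset.mem_filter, Finset.mem_univ,
      true_and, exists_prop]
    constructor
    · rintro ⟨hωB, hωN⟩
      obtain ⟨v, hv⟩ := exists_pattern hωN j d
      exact ⟨v, (hB v ω hωN hv).mp hωB, hv, hωN⟩
    · rintro ⟨v, hPv, hv, hωN⟩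
      exact ⟨(hB v ω hωN hv).mpr hPv, hωN⟩
  have hdisj : (↑(Finset.univ.filter P) : Set (Fin d → Bool)).PairwiseDisjoint
      (fun v => Pev X j v ∩ NN X) := by
    intro v _ v' _ hvv
    apply Set.disjoint_left.mpr
    intro ω h1' h2'
    have := Pev_disj (X := X) j hvv
    rw [Set.eq_empty_iff_forall_notMem] at this
    exact this ω ⟨h1'.1, h2'.1⟩
  rw [hBN, hunion, measure_biUnion_finset hdisj
    (fun v _ => (mble_Pev hmeas j v).inter (mble_NN hmeas))]
  rw [Finset.sum_filter]
  apply Finset.sum_congr rfl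
  intro v hv
  by_cases hPv : P v
  · rw [if_pos hPv, if_pos hPv]
    have : μ (Pev X j v ∩ NN X) = μ (Pev X j v) := by
      apply measure_congr
      filter_upwards [hae] with ω hω
      simp only [eq_iff_iff, Set.mem_inter_iff]
      exact ⟨fun h => h.1, fun h => ⟨h, hω⟩⟩
    rw [this, meas_Pev hmeas hindep hident h1 h2]
  · rw [if_neg hPv, if_neg hPv]

lemma mem_ESn_iff_pattern {j k n : ℕ} {v : Fin n → Bool} {ω : Ω} (hv : ω ∈ Pev X j v) :
    ω ∈ ESn X j k n ↔ (∀ s, 1 ≤ s → s ≤ n → -(k : ℝ) ≤ bsum v s) := by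
  constructor
  · intro h s h1 h2
    rw [← pSh_eq_bsum hv h2]
    exact h s h1 h2
  · intro h s h1 h2
    rw [pSh_eq_bsum hv h2]
    exact h s h1 h2

open Classical in
lemma meas_ESn_shift (hmeas : ∀ i, Measurable (X i))
    (hindep : iIndepFun X μ)
    (hident : ∀ i, IdentDistrib (X i) (X 0) μ μ)
    (h1 : μ {ω | X 0 ω = 1} = 2 / 3) (h2 : μ {ω | X 0 ω = -2} = 1 / 3)
    (j k n : ℕ) : μ (ESn X j k n) = μ (ESn X 0 k n) := by
  have hgen : ∀ j', μ (ESn X j' k n) =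
      ∑ v : Fin n → Bool, if (∀ s, 1 ≤ s → s ≤ n → -(k : ℝ) ≤ bsum v s) then
        ∏ i, pbE (v i) else 0 := by
    intro j'
    exact meas_of_pattern hmeas hindep hident h1 h2 j' n _ _
      (fun v ω _ hv => mem_ESn_iff_pattern hv)
  rw [hgen j, hgen 0]

lemma ES_eq_iInter (j k : ℕ) : ES X j k = ⋂ n, ESn X j k n := by
  ext ω
  simp only [ES, ESn, Set.mem_setOf_eq, Set.mem_iInter]
  constructor
  · intro h n s h1 _
    exact h s h1
  · intro h s h1
    exact h s s h1 le_rfl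

lemma ESn_antitone (j k : ℕ) : Antitone (fun n => ESn X j k n) := by
  intro n m hnm ω hω s h1 h2
  exact hω s h1 (le_trans h2 hnm)

lemma meas_ES_eq_iInf (hmeas : ∀ i, Measurable (X i)) (j k : ℕ) :
    μ (ES X j k) = ⨅ n, μ (ESn X j k n) := by
  rw [ES_eq_iInter]
  refine Antitone.measure_iInter (ESn_antitone j k) (fun n => ?_) ⟨0, measure_ne_top μ _⟩
  exact (mble_ESn j k n (fun i => hmeas (j + i))).nullMeasurableSet

lemma meas_ES_shift (hmeas : ∀ i, Measurable (X i))
    (hindep : iIndepFun X μ)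
    (hident : ∀ i, IdentDistrib (X i) (X 0) μ μ)
    (h1 : μ {ω | X 0 ω = 1} = 2 / 3) (h2 : μ {ω | X 0 ω = -2} = 1 / 3)
    (j k : ℕ) : μ (ES X j k) = μ (ES X 0 k) := by
  rw [meas_ES_eq_iInf hmeas, meas_ES_eq_iInf hmeas]
  exact iInf_congr fun n => meas_ESn_shift hmeas hindep hident h1 h2 j k n

lemma indep_head (hmeas : ∀ i, Measurable (X i))
    (hindep : iIndepFun X μ) (c : ℕ) :
    Indep (⨆ i ∈ Set.Iio c, MeasurableSpace.comap (X i) inferInstance)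
      (⨆ i ∈ Set.Ici c, MeasurableSpace.comap (X i) inferInstance) μ := by
  refine indep_iSup_of_disjoint (fun i => (hmeas i).comap_le) ?_ (Set.Iio_disjoint_Ici le_rfl)
  exact hindep

lemma mble_head {c : ℕ} {E : Set Ω} {m' : MeasurableSpace Ω}
    (h : MeasurableSet[m'] E) (i : ℕ) (hi : i < c)
    (hm : m' = MeasurableSpace.comap (X i) inferInstance) :
    MeasurableSet[⨆ i ∈ Set.Iio c, MeasurableSpace.comap (X i) inferInstance] E := by
  subst hm
  exact le_iSup₂ (f := fun (i : ℕ) (_ : i ∈ Set.Iio c) =>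
    MeasurableSpace.comap (X i) inferInstance) i hi E h

lemma mble_tail_X (c : ℕ) (i : ℕ) :
    Measurable[⨆ i ∈ Set.Ici c, MeasurableSpace.comap (X i) inferInstance] (X (c + i)) := by
  have h1 : Measurable[MeasurableSpace.comap (X (c + i)) inferInstance] (X (c + i)) :=
    fun s hs => ⟨s, hs, rfl⟩
  exact h1.mono (le_iSup₂ (f := fun (i : ℕ) (_ : i ∈ Set.Ici c) =>
    MeasurableSpace.comap (X i) inferInstance) (c + i) (Nat.le_add_right c i)) le_rfl

lemma indep_X0_ES (hmeas : ∀ i, Measurable (X i))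
    (hindep : iIndepFun X μ) (r : ℝ) (k : ℕ) :
    μ ({ω | X 0 ω = r} ∩ ES X 1 k) = μ {ω | X 0 ω = r} * μ (ES X 1 k) := by
  have hIndep := indep_head hmeas hindep 1
  have hA : MeasurableSet[⨆ i ∈ Set.Iio 1, MeasurableSpace.comap (X i) inferInstance]
      {ω : Ω | X 0 ω = r} :=
    mble_head (m' := MeasurableSpace.comap (X 0) inferInstance)
      ⟨{r}, measurableSet_singleton r, rfl⟩ 0 (by norm_num) rfl
  have hB : MeasurableSet[⨆ i ∈ Set.Ici 1, MeasurableSpace.comap (X i) inferInstance]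
      (ES X 1 k) :=
    mble_ES 1 k (fun i => mble_tail_X 1 i)
  exact (Indep_iff _ _ μ).mp hIndep _ _ hA hB

end Recurrence

section Recurrence2

variable {μ : Measure Ω} [IsProbabilityMeasure μ]

lemma pSh_zero_succ (s : ℕ) (ω : Ω) : pSh X 0 (s + 1) ω = X 0 ω + pSh X 1 s ω := by
  induction s with
  | zero => simp [pSh]
  | succ s ih =>
    rw [pSh_succ, ih, pSh_succ]
    have : 0 + (s + 1) = 1 + s := by omega
    rw [this]
    ring

lemma meas_inter_NN (hae : ∀ᵐ ω ∂μ, ω ∈ NN X) (B : Set Ω) : μ (B ∩ NN X) = μ B := by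
  apply measure_congr
  filter_upwards [hae] with ω hω
  simp only [eq_iff_iff, Set.mem_inter_iff]
  exact ⟨fun h => h.1, fun h => ⟨h, hω⟩⟩

lemma ES_split {k : ℕ} (hk : 2 ≤ k) :
    ES X 0 k ∩ NN X = (({ω | X 0 ω = 1} ∩ ES X 1 (k + 1)) ∩ NN X) ∪
      (({ω | X 0 ω = -2} ∩ ES X 1 (k - 2)) ∩ NN X) := by
  have hcast : ((k - 2 : ℕ) : ℝ) = (k : ℝ) - 2 := by
    push_cast [hk]
    ring
  ext ω
  simp only [Set.mem_inter_iff, Set.mem_union, Set.mem_setOf_eq, ES]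
  constructor
  · rintro ⟨hES, hN⟩
    rcases hN 0 with hx | hx
    · refine Or.inl ⟨⟨hx, fun s h1 => ?_⟩, hN⟩
      have h := hES (s + 1) (by omega)
      rw [pSh_zero_succ, hx] at h
      push_cast
      linarith
    · refine Or.inr ⟨⟨hx, fun s h1 => ?_⟩, hN⟩
      have h := hES (s + 1) (by omega)
      rw [pSh_zero_succ, hx] at h
      rw [hcast]
      linarith
  · have hk0 : (0:ℝ) ≤ (k : ℝ) := Nat.cast_nonneg k
    rintro (⟨⟨hx, hES⟩, hN⟩ | ⟨⟨hx, hES⟩, hN⟩) <;> refine ⟨fun s h1 => ?_, hN⟩ <;>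
      obtain ⟨s', rfl⟩ : ∃ s', s = s' + 1 := ⟨s - 1, by omega⟩ <;>
      rw [pSh_zero_succ, hx]
    · rcases Nat.eq_zero_or_pos s' with rfl | hs'
      · simp only [pSh, Finset.range_zero, Finset.sum_empty]
        linarith
      · have h := hES s' (by omega)
        push_cast at h
        linarith
    · rcases Nat.eq_zero_or_pos s' with rfl | hs'
      · simp only [pSh, Finset.range_zero, Finset.sum_empty]
        have : (2:ℝ) ≤ (k:ℝ) := by exact_mod_cast hk
        linarith
      · have h := hES s' (by omega)
        rw [hcast] at h
        linarith

lemma ES_split0 :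
    ES X 0 0 ∩ NN X = (({ω | X 0 ω = 1} ∩ ES X 1 1) ∩ NN X) := by
  ext ω
  simp only [Set.mem_inter_iff, Set.mem_setOf_eq, ES]
  constructor
  · rintro ⟨hES, hN⟩
    rcases hN 0 with hx | hx
    · refine ⟨⟨hx, fun s h1 => ?_⟩, hN⟩
      have h := hES (s + 1) (by omega)
      rw [pSh_zero_succ, hx] at h
      push_cast at h ⊢
      linarith
    · exfalso
      have h := hES 1 le_rfl
      rw [show (1:ℕ) = 0 + 1 from rfl, pSh_zero_succ, hx] at h
      simp only [pSh, Finset.range_zero, Finset.sum_empty] at h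
      norm_num at h
  · rintro ⟨⟨hx, hES⟩, hN⟩
    refine ⟨fun s h1 => ?_, hN⟩
    obtain ⟨s', rfl⟩ : ∃ s', s = s' + 1 := ⟨s - 1, by omega⟩
    rw [pSh_zero_succ, hx]
    rcases Nat.eq_zero_or_pos s' with rfl | hs'
    · simp only [pSh, Finset.range_zero, Finset.sum_empty]
      norm_num
    · have h := hES s' (by omega)
      push_cast at h ⊢
      linarith

lemma disj_X0 {k m : ℕ} : Disjoint (({ω : Ω | X 0 ω = 1} ∩ ES X 1 k) ∩ NN X)
    (({ω : Ω | X 0 ω = -2} ∩ ES X 1 m) ∩ NN X) := by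
  rw [Set.disjoint_left]
  rintro ω ⟨⟨h1', -⟩, -⟩ ⟨⟨h2', -⟩, -⟩
  simp only [Set.mem_setOf_eq] at h1' h2'
  rw [h1'] at h2'
  norm_num at h2'

lemma qq_rec_E (hmeas : ∀ i, Measurable (X i))
    (hindep : iIndepFun X μ)
    (hident : ∀ i, IdentDistrib (X i) (X 0) μ μ)
    (h1 : μ {ω | X 0 ω = 1} = 2 / 3) (h2 : μ {ω | X 0 ω = -2} = 1 / 3)
    {k : ℕ} (hk : 2 ≤ k) :
    μ (ES X 0 k) = 2/3 * μ (ES X 0 (k + 1)) + 1/3 * μ (ES X 0 (k - 2)) := by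
  have hae := ae_NN hmeas hident h1 h2
  have hmble2 : MeasurableSet (({ω : Ω | X 0 ω = -2} ∩ ES X 1 (k - 2)) ∩ NN X) :=
    (((hmeas 0) (measurableSet_singleton (-2))).inter
      (mble_ES 1 (k - 2) (fun i => hmeas (1 + i)))).inter (mble_NN hmeas)
  rw [← meas_inter_NN hae (ES X 0 k), ES_split hk, measure_union disj_X0 hmble2,
    meas_inter_NN hae, meas_inter_NN hae, indep_X0_ES hmeas hindep 1 (k + 1),
    indep_X0_ES hmeas hindep (-2) (k - 2), h1, h2,
    meas_ES_shift hmeas hindep hident h1 h2 1 (k + 1),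
    meas_ES_shift hmeas hindep hident h1 h2 1 (k - 2)]

lemma qq_base_E (hmeas : ∀ i, Measurable (X i))
    (hindep : iIndepFun X μ)
    (hident : ∀ i, IdentDistrib (X i) (X 0) μ μ)
    (h1 : μ {ω | X 0 ω = 1} = 2 / 3) (h2 : μ {ω | X 0 ω = -2} = 1 / 3) :
    μ (ES X 0 0) = 2/3 * μ (ES X 0 1) := by
  have hae := ae_NN hmeas hident h1 h2
  rw [← meas_inter_NN hae (ES X 0 0), ES_split0, meas_inter_NN hae,
    indep_X0_ES hmeas hindep 1 1, h1, meas_ES_shift hmeas hindep hident h1 h2 1 1]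

/-- The purely real-analytic core of the recurrence argument. -/
lemma keyrec (q : ℕ → ℝ) (h0 : q 0 = 2/3 * q 1)
    (hrec : ∀ k, 2 ≤ k → q k = 2/3 * q (k + 1) + 1/3 * q (k - 2))
    (hmono : Monotone q) (hb : ∀ k, q k ≤ 1) : ∀ k, q k = 0 := by
  have hdnn : ∀ k, 0 ≤ q (k + 1) - q k := fun k => sub_nonneg.mpr (hmono (Nat.le_succ k))
  have hdrec : ∀ k, q (k + 3) - q (k + 2) =
      ((q (k + 2) - q (k + 1)) + (q (k + 1) - q k)) / 2 := by
    intro k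
    have h2 := hrec (k + 2) (by omega)
    have he : (k + 2) - 2 = k := by omega
    rw [he] at h2
    have h3 : k + 2 + 1 = k + 3 := by omega
    rw [h3] at h2
    linarith
  have hzero : ∀ k, q (k + 1) - q k = 0 := by
    by_contra hc
    push_neg at hc
    obtain ⟨j, hj⟩ := hc
    have hjpos : 0 < q (j + 1) - q j := lt_of_le_of_ne (hdnn j) (Ne.symm hj)
    have h2 : 0 < q (j + 3) - q (j + 2) := by
      rw [hdrec j]
      linarith [hdnn (j + 1)]
    have h3 : 0 < q (j + 4) - q (j + 3) := by
      have := hdrec (j + 1)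
      have e1 : j + 1 + 3 = j + 4 := by omega
      have e2 : j + 1 + 2 = j + 3 := by omega
      have e3 : j + 1 + 1 = j + 2 := by omega
      rw [e1, e2, e3] at this
      rw [this]
      linarith [hdnn (j + 1), h2]
    set ε := min (q (j + 3) - q (j + 2)) (q (j + 4) - q (j + 3)) with hε
    have hεpos : 0 < ε := lt_min h2 h3
    have hge : ∀ n, ε ≤ q (j + 3 + n) - q (j + 2 + n) ∧
        ε ≤ q (j + 4 + n) - q (j + 3 + n) := by
      intro n
      induction n with
      | zero => exact ⟨min_le_left _ _, min_le_right _ _⟩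
      | succ n ih =>
        obtain ⟨ih1, ih2⟩ := ih
        have hr := hdrec (j + 2 + n)
        have e1 : j + 2 + n + 3 = j + 5 + n := by omega
        have e2 : j + 2 + n + 2 = j + 4 + n := by omega
        have e3 : j + 2 + n + 1 = j + 3 + n := by omega
        rw [e1, e2, e3] at hr
        have e4 : j + 3 + (n + 1) = j + 4 + n := by omega
        have e5 : j + 2 + (n + 1) = j + 3 + n := by omega
        have e6 : j + 4 + (n + 1) = j + 5 + n := by omega
        rw [e4, e5, e6]
        exact ⟨ih2, by linarith⟩
    have hsum : ∀ n, q (j + 2) + n * ε ≤ q (j + 2 + n) := by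
      intro n
      induction n with
      | zero => simp
      | succ n ih =>
        have e1 : j + 2 + (n + 1) = (j + 2 + n) + 1 := by omega
        rw [e1]
        have hdn : ε ≤ q (j + 3 + n) - q (j + 2 + n) := (hge n).1
        have e2 : j + 3 + n = j + 2 + n + 1 := by omega
        rw [e2] at hdn
        push_cast
        linarith
    obtain ⟨n, hn⟩ := exists_nat_gt ((1 - q (j + 2)) / ε)
    have hs := hsum n
    have hq := hb (j + 2 + n)
    have hnε : (n : ℝ) * ε ≤ 1 - q (j + 2) := by linarith
    have : (n : ℝ) ≤ (1 - q (j + 2)) / ε := (le_div_iff₀ hεpos).mpr hnε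
    linarith
  have hconst : ∀ k, q k = q 0 := by
    intro k
    induction k with
    | zero => rfl
    | succ k ih =>
      have := hzero k
      linarith
  have h00 : q 0 = 0 := by
    have h1' := hconst 1
    rw [h1'] at h0
    linarith
  intro k
  rw [hconst k, h00]

lemma qq_zero (hmeas : ∀ i, Measurable (X i))
    (hindep : iIndepFun X μ)
    (hident : ∀ i, IdentDistrib (X i) (X 0) μ μ)
    (h1 : μ {ω | X 0 ω = 1} = 2 / 3) (h2 : μ {ω | X 0 ω = -2} = 1 / 3) :
    ∀ k, μ (ES X 0 k) = 0 := by
  have hq := keyrec (fun k => (μ (ES X 0 k)).toReal)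
  have hkey : ∀ k, (μ (ES X 0 k)).toReal = 0 := by
    apply hq
    · have := qq_base_E hmeas hindep hident h1 h2
      rw [this, ENNReal.toReal_mul]
      norm_num [ENNReal.toReal_div]
    · intro k hk
      have := qq_rec_E hmeas hindep hident h1 h2 hk
      rw [this, ENNReal.toReal_add (by
          exact ENNReal.mul_ne_top (by simp [ENNReal.div_eq_top]) (measure_ne_top μ _))
        (by exact ENNReal.mul_ne_top (by simp [ENNReal.div_eq_top]) (measure_ne_top μ _)),
        ENNReal.toReal_mul, ENNReal.toReal_mul]
      norm_num [ENNReal.toReal_div]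
    · intro k m hkm
      apply ENNReal.toReal_mono (measure_ne_top μ _)
      apply measure_mono
      intro ω hω s h1' 
      have := hω s h1'
      have hc : ((k:ℝ)) ≤ (m:ℝ) := by exact_mod_cast hkm
      linarith
    · intro k
      have hle := prob_le_one (μ := μ) (s := ES X 0 k)
      have h' := ENNReal.toReal_mono (by norm_num) hle
      simpa using h'
  intro k
  have := hkey k
  rcases ENNReal.toReal_eq_zero_iff _ |>.mp this with h | h
  · exact h
  · exact absurd h (measure_ne_top μ _)

lemma meas_stay_zero (hmeas : ∀ i, Measurable (X i))
    (hindep : iIndepFun X μ)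
    (hident : ∀ i, IdentDistrib (X i) (X 0) μ μ)
    (h1 : μ {ω | X 0 ω = 1} = 2 / 3) (h2 : μ {ω | X 0 ω = -2} = 1 / 3) :
    ∀ j k, μ (ES X j k) = 0 := by
  intro j k
  rw [meas_ES_shift hmeas hindep hident h1 h2]
  exact qq_zero hmeas hindep hident h1 h2 k

lemma meas_N2_compl {α : ℤ} (hα : 2 ≤ α) (hmeas : ∀ i, Measurable (X i))
    (hindep : iIndepFun X μ)
    (hident : ∀ i, IdentDistrib (X i) (X 0) μ μ)
    (h1 : μ {ω | X 0 ω = 1} = 2 / 3) (h2 : μ {ω | X 0 ω = -2} = 1 / 3) :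
    μ (N2 X (α : ℝ))ᶜ = 0 := by
  have hES0 := meas_stay_zero hmeas hindep hident h1 h2
  have hae := ae_NN hmeas hident h1 h2
  have hcompl : (N2 X (α : ℝ))ᶜ = ⋃ a : ℕ, {ω : Ω | ∀ s, a < s → (α : ℝ) ≤ pS X s ω} := by
    ext ω
    simp only [N2, Set.mem_compl_iff, Set.mem_setOf_eq, Set.mem_iUnion, not_forall,
      not_exists, not_and, not_lt]
  rw [hcompl]
  apply measure_iUnion_null
  intro a
  -- W_a ∩ NN ⊆ ⋃ k, ES X (a+1) k
  have hsub : {ω : Ω | ∀ s, a < s → (α : ℝ) ≤ pS X s ω} ∩ NN X ⊆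
      ⋃ k : ℕ, ES X (a + 1) k := by
    rintro ω ⟨hW, hN⟩
    obtain ⟨z, hz⟩ := exists_int_pS hN (a + 1)
    have hza : (α : ℝ) ≤ (z : ℝ) := by rw [← hz]; exact hW (a + 1) (by omega)
    have hzα : α ≤ z := by exact_mod_cast hza
    refine Set.mem_iUnion.mpr ⟨(z - α).toNat, ?_⟩
    intro s hs1
    have hps := hW (a + 1 + s) (by omega)
    rw [pS_add, hz] at hps
    have hcast : (((z - α).toNat : ℕ) : ℝ) = (z : ℝ) - (α : ℝ) := by
      have h' : ((z - α).toNat : ℤ) = z - α := Int.toNat_of_nonneg (by omega)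
      have := congrArg (fun t : ℤ => (t : ℝ)) h'
      push_cast at this
      linarith
    rw [hcast]
    linarith
  have hWN : μ ({ω : Ω | ∀ s, a < s → (α : ℝ) ≤ pS X s ω} ∩ NN X) = 
      μ {ω : Ω | ∀ s, a < s → (α : ℝ) ≤ pS X s ω} := meas_inter_NN hae _
  rw [← hWN]
  apply measure_mono_null hsub
  exact measure_iUnion_null fun k => hES0 (a + 1) k

end Recurrence2
section Integration

variable {μ : Measure Ω} [IsProbabilityMeasure μ]

open Classical in
/-- pattern condition: first descent below `0` exactly at time `d` -/
def condB (d : ℕ) (v : Fin d → Bool) : Prop :=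
  (∀ s, 0 < s → s < d → 0 ≤ bsum v s) ∧ bsum v d < 0

open Classical in
/-- explicit value of the integral of `g` over the event `fdT = d+1` -/
def Tsum (A : ℝ) (d : ℕ) : ℝ :=
  ∑ v : Fin (d + 1) → Bool, if condB (d + 1) v then (A + bsum v (d + 1)) * ∏ i, pbR (v i)
    else 0

lemma mble_head_X (c i : ℕ) (hi : i < c) :
    Measurable[⨆ i ∈ Set.Iio c, MeasurableSpace.comap (X i) inferInstance] (X i) := by
  have h1 : Measurable[MeasurableSpace.comap (X i) inferInstance] (X i) :=
    fun s hs => ⟨s, hs, rfl⟩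
  exact h1.mono (le_iSup₂ (f := fun (i : ℕ) (_ : i ∈ Set.Iio c) =>
    MeasurableSpace.comap (X i) inferInstance) i hi) le_rfl

lemma fdT_eq_iff_pattern {c d : ℕ} {v : Fin (d + 1) → Bool} {ω : Ω} (hv : ω ∈ Pev X c v) :
    fdT X c ω = d + 1 ↔ condB (d + 1) v := by
  have hrfl : fdT X c ω = sInf {s : ℕ | 0 < s ∧ pSh X c s ω < 0} := rfl
  rw [hrfl, sInf_fiber_eq]
  constructor
  · rintro (⟨hmem, hmin⟩ | ⟨h, -⟩)
    · constructor
      · intro s hs0 hsd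
        have := hmin s (by omega)
        simp only [Set.mem_setOf_eq, not_and, not_lt] at this
        rw [← pSh_eq_bsum hv (by omega : s ≤ d + 1)]
        exact this hs0
      · rw [← pSh_eq_bsum hv le_rfl]
        exact hmem.2
    · omega
  · rintro ⟨hpos, hneg⟩
    left
    constructor
    · exact ⟨by omega, by rw [pSh_eq_bsum hv le_rfl]; exact hneg⟩
    · intro s hs
      simp only [Set.mem_setOf_eq, not_and, not_lt]
      intro hs0
      rw [pSh_eq_bsum hv (by omega : s ≤ d + 1)]
      exact hpos s hs0 (by omega)

open Classical in
lemma int_Dev (hmeas : ∀ i, Measurable (X i))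
    (hindep : iIndepFun X μ)
    (hident : ∀ i, IdentDistrib (X i) (X 0) μ μ)
    (h1 : μ {ω | X 0 ω = 1} = 2 / 3) (h2 : μ {ω | X 0 ω = -2} = 1 / 3)
    (A : ℝ) (c d : ℕ) :
    ∫ ω in {ω | fdT X c ω = d + 1}, (A + pSh X c (d + 1) ω) ∂μ = Tsum A d := by
  have hae := ae_NN hmeas hident h1 h2
  set Dev := {ω : Ω | fdT X c ω = d + 1} with hDev
  have hDevm : MeasurableSet Dev := (mble_fdT c (fun i => hmeas (c + i)))
    (measurableSet_singleton (d + 1))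
  -- replace by intersection with NN
  have hDevN : Dev =ᵐ[μ] ((Dev ∩ NN X : Set Ω) : Set Ω) := by
    filter_upwards [hae] with ω hω
    simp only [eq_iff_iff, Set.mem_inter_iff]
    exact ⟨fun h => ⟨h, hω⟩, fun h => h.1⟩
  rw [setIntegral_congr_set hDevN]
  -- decompose into cylinders
  have hunion : Dev ∩ NN X =
      ⋃ v ∈ Finset.univ.filter (condB (d + 1)), (Pev X c v ∩ NN X) := by
    ext ω
    simp only [Set.mem_inter_iff, Set.mem_iUnion, Finset.mem_filter, Finset.mem_univ,
      true_and, exists_prop, hDev, Set.mem_setOf_eq]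
    constructor
    · rintro ⟨hωD, hωN⟩
      obtain ⟨v, hv⟩ := exists_pattern hωN c (d + 1)
      exact ⟨v, (fdT_eq_iff_pattern hv).mp hωD, hv, hωN⟩
    · rintro ⟨v, hPv, hv, hωN⟩
      exact ⟨(fdT_eq_iff_pattern hv).mpr hPv, hωN⟩
  rw [hunion]
  have hpm : ∀ v : Fin (d + 1) → Bool, MeasurableSet (Pev X c v ∩ NN X) :=
    fun v => (mble_Pev hmeas c v).inter (mble_NN hmeas)
  have hdisj : (↑(Finset.univ.filter (condB (d + 1))) : Set (Fin (d + 1) → Bool)).Pairwise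
      (Function.onFun Disjoint (fun v => Pev X c v ∩ NN X)) := by
    intro v _ v' _ hvv
    apply Set.disjoint_left.mpr
    intro ω h1' h2'
    have := Pev_disj (X := X) c hvv
    rw [Set.eq_empty_iff_forall_notMem] at this
    exact this ω ⟨h1'.1, h2'.1⟩
  have hint : ∀ v ∈ Finset.univ.filter (condB (d + 1)),
      IntegrableOn (fun ω => A + pSh X c (d + 1) ω) (Pev X c v ∩ NN X) μ := by
    intro v _
    have : IntegrableOn (fun _ : Ω => A + bsum v (d + 1)) (Pev X c v ∩ NN X) μ :=
      integrableOn_const (measure_ne_top μ _)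
    apply this.congr_fun ?_ (hpm v)
    intro ω hω
    simp only [pSh_eq_bsum hω.1 le_rfl]
  rw [integral_biUnion_finset _ (fun v _ => hpm v) hdisj hint]
  rw [Tsum, ← Finset.sum_filter]
  apply Finset.sum_congr rfl
  intro v hv
  rw [Finset.mem_filter] at hv
  have hconst : ∫ ω in Pev X c v ∩ NN X, (A + pSh X c (d + 1) ω) ∂μ =
      ∫ _ω in Pev X c v ∩ NN X, (A + bsum v (d + 1)) ∂μ := by
    apply setIntegral_congr_fun (hpm v)
    intro ω hω
    simp only [pSh_eq_bsum hω.1 le_rfl]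
  rw [hconst, setIntegral_const, smul_eq_mul, mul_comm]
  congr 1
  have hN : μ (Pev X c v ∩ NN X) = μ (Pev X c v) := by
    apply measure_congr
    filter_upwards [hae] with ω hω
    simp only [eq_iff_iff, Set.mem_inter_iff]
    exact ⟨fun h => h.1, fun h => ⟨h, hω⟩⟩
  rw [measureReal_def, hN, meas_Pev hmeas hindep hident h1 h2, ENNReal.toReal_prod]
  exact Finset.prod_congr rfl fun i _ => pbE_toReal (v i)

end Integration

section Integration2

variable {μ : Measure Ω} [IsProbabilityMeasure μ]

lemma integrable_g {α : ℤ} (hα : 2 ≤ α) (hmeas : ∀ i, Measurable (X i))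
    (hident : ∀ i, IdentDistrib (X i) (X 0) μ μ)
    (h1 : μ {ω | X 0 ω = 1} = 2 / 3) (h2 : μ {ω | X 0 ω = -2} = 1 / 3) (c : ℕ) :
    Integrable (g X (α : ℝ) c) μ := by
  have hA2 : (2 : ℝ) ≤ (α : ℝ) := by exact_mod_cast hα
  constructor
  · exact (mble_g (α : ℝ) c (fun i => hmeas (c + i))).aestronglyMeasurable
  · apply HasFiniteIntegral.of_bounded (C := (α : ℝ))
    filter_upwards [ae_NN hmeas hident h1 h2] with ω hω
    obtain ⟨hg0, hgA⟩ := g_bounds hA2 hω c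
    rw [Real.norm_eq_abs, abs_le]
    constructor <;> linarith

lemma int_g_eq_T {α : ℤ} (hα : 2 ≤ α) (hmeas : ∀ i, Measurable (X i))
    (hindep : iIndepFun X μ)
    (hident : ∀ i, IdentDistrib (X i) (X 0) μ μ)
    (h1 : μ {ω | X 0 ω = 1} = 2 / 3) (h2 : μ {ω | X 0 ω = -2} = 1 / 3) (c : ℕ) :
    ∫ ω, g X (α : ℝ) c ω ∂μ = ∑' d : ℕ, Tsum (α : ℝ) d := by
  have hintg := integrable_g hα hmeas hident h1 h2 (μ := μ) c
  set U : Set Ω := ⋃ d : ℕ, {ω | fdT X c ω = d + 1} with hU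
  have hfib : ∀ d : ℕ, MeasurableSet {ω : Ω | fdT X c ω = d} :=
    fun d => (mble_fdT c (fun i => hmeas (c + i))) (measurableSet_singleton d)
  have hUm : MeasurableSet U := MeasurableSet.iUnion fun d => hfib (d + 1)
  have hsplit : ∫ ω, g X (α : ℝ) c ω ∂μ =
      (∫ ω in U, g X (α : ℝ) c ω ∂μ) + ∫ ω in Uᶜ, g X (α : ℝ) c ω ∂μ :=
    (integral_add_compl hUm hintg).symm
  have hUc : ∫ ω in Uᶜ, g X (α : ℝ) c ω ∂μ = 0 := by
    have hUceq : Uᶜ = {ω : Ω | fdT X c ω = 0} := by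
      ext ω
      simp only [hU, Set.mem_compl_iff, Set.mem_iUnion, Set.mem_setOf_eq, not_exists]
      constructor
      · intro h
        rcases Nat.eq_zero_or_pos (fdT X c ω) with h0 | h0
        · exact h0
        · have := h (fdT X c ω - 1)
          omega
      · intro h d
        omega
    rw [hUceq]
    have : ∀ ω ∈ {ω : Ω | fdT X c ω = 0}, g X (α : ℝ) c ω = 0 := by
      intro ω hω
      simp only [Set.mem_setOf_eq] at hω
      simp [g, hω]
    rw [setIntegral_congr_fun (hfib 0) this]
    simp
  have hdisj : Pairwise (Function.onFun Disjoint (fun d : ℕ => {ω : Ω | fdT X c ω = d + 1})) := by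
    intro d d' hdd
    apply Set.disjoint_left.mpr
    intro ω h1' h2'
    simp only [Set.mem_setOf_eq] at h1' h2'
    omega
  have hiU : ∫ ω in U, g X (α : ℝ) c ω ∂μ =
      ∑' d : ℕ, ∫ ω in {ω : Ω | fdT X c ω = d + 1}, g X (α : ℝ) c ω ∂μ := by
    rw [hU]
    exact integral_iUnion (fun d => hfib (d + 1)) hdisj hintg.integrableOn
  have hpiece : ∀ d : ℕ, ∫ ω in {ω : Ω | fdT X c ω = d + 1}, g X (α : ℝ) c ω ∂μ =
      Tsum (α : ℝ) d := by
    intro d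
    have : ∀ ω ∈ {ω : Ω | fdT X c ω = d + 1}, g X (α : ℝ) c ω =
        (α : ℝ) + pSh X c (d + 1) ω := by
      intro ω hω
      simp only [Set.mem_setOf_eq] at hω
      rw [g, hω]
      simp
    rw [setIntegral_congr_fun (hfib (d + 1)) this]
    exact int_Dev hmeas hindep hident h1 h2 (α : ℝ) c d
  rw [hsplit, hUc, hiU, add_zero]
  exact tsum_congr hpiece

lemma int_g_inter {α : ℤ} (hα : 2 ≤ α) (hmeas : ∀ i, Measurable (X i))
    (hindep : iIndepFun X μ)
    (hident : ∀ i, IdentDistrib (X i) (X 0) μ μ)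
    (h1 : μ {ω | X 0 ω = 1} = 2 / 3) (h2 : μ {ω | X 0 ω = -2} = 1 / 3) (c : ℕ)
    {E : Set Ω}
    (hE : MeasurableSet[⨆ i ∈ Set.Iio c, MeasurableSpace.comap (X i) inferInstance] E) :
    ∫ ω in E, g X (α : ℝ) c ω ∂μ = (μ E).toReal * ∑' d : ℕ, Tsum (α : ℝ) d := by
  have hEamb : MeasurableSet E := by
    have hle : (⨆ i ∈ Set.Iio c, MeasurableSpace.comap (X i) inferInstance) ≤
        (inferInstance : MeasurableSpace Ω) :=
      iSup₂_le fun i _ => (hmeas i).comap_le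
    exact hle _ hE
  have hgB : Measurable[⨆ i ∈ Set.Ici c, MeasurableSpace.comap (X i) inferInstance]
      (g X (α : ℝ) c) := mble_g (α : ℝ) c (fun i => mble_tail_X c i)
  have hindA : Measurable[⨆ i ∈ Set.Iio c, MeasurableSpace.comap (X i) inferInstance]
      (E.indicator (fun _ => (1 : ℝ))) := measurable_const.indicator hE
  have hIndepF : IndepFun (E.indicator (fun _ => (1 : ℝ))) (g X (α : ℝ) c) μ := by
    rw [IndepFun_iff]
    intro t1 t2 ht1 ht2
    exact (Indep_iff _ _ μ).mp (indep_head hmeas hindep c) t1 t2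
      (hindA.comap_le t1 ht1) (hgB.comap_le t2 ht2)
  have hprodfun : (fun ω => E.indicator (fun _ => (1 : ℝ)) ω * g X (α : ℝ) c ω) =
      E.indicator (g X (α : ℝ) c) := by
    funext ω
    by_cases hω : ω ∈ E
    · simp [Set.indicator_of_mem hω]
    · simp [Set.indicator_of_notMem hω]
  have hintg := integrable_g hα hmeas hident h1 h2 (μ := μ) c
  have hmul := hIndepF.integral_mul_eq_mul_integral
    ((integrable_const (1 : ℝ)).indicator hEamb).aestronglyMeasurable hintg.aestronglyMeasurable
  have hlhs : (E.indicator (fun _ => (1 : ℝ)) * g X (α : ℝ) c) =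
      E.indicator (g X (α : ℝ) c) := hprodfun
  rw [hlhs] at hmul
  have hione : integral μ (E.indicator fun _ => (1 : ℝ)) = (μ E).toReal := by
    rw [← measureReal_def]; exact integral_indicator_one (μ := μ) hEamb
  rw [← integral_indicator hEamb, hmul, hione, int_g_eq_T hα hmeas hindep hident h1 h2 c]

end Integration2

section MainCalc

variable {μ : Measure Ω} [IsProbabilityMeasure μ]

lemma integrable_f {α : ℤ} (hα : 2 ≤ α) (hmeas : ∀ i, Measurable (X i))
    (hident : ∀ i, IdentDistrib (X i) (X 0) μ μ)
    (h1 : μ {ω | X 0 ω = 1} = 2 / 3) (h2 : μ {ω | X 0 ω = -2} = 1 / 3) (i : ℕ) :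
    Integrable (fun ω => pS X ((cdTimes X (α : ℝ) i ω).2) ω) μ := by
  constructor
  · exact (mble_stau (α : ℝ) (fun i => hmeas i) i).aestronglyMeasurable
  · apply HasFiniteIntegral.of_bounded (C := (α : ℝ))
    filter_upwards [ae_NN hmeas hident h1 h2] with ω hω
    rw [Real.norm_eq_abs]
    exact abs_f_le hα hω i

lemma cross1_calc {α : ℤ} (hα : 2 ≤ α) (hmeas : ∀ i, Measurable (X i))
    (hindep : iIndepFun X μ)
    (hident : ∀ i, IdentDistrib (X i) (X 0) μ μ)
    (h1 : μ {ω | X 0 ω = 1} = 2 / 3) (h2 : μ {ω | X 0 ω = -2} = 1 / 3) :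
    ∫ ω in crossEv X (α : ℝ) 1, pS X ((cdTimes X (α : ℝ) 1 ω).2) ω ∂μ
      = (μ (crossEv X (α : ℝ) 1)).toReal * ∑' d : ℕ, Tsum (α : ℝ) d := by
  have hae := ae_NN hmeas hident h1 h2
  set A := (α : ℝ) with hA
  set U1 : Set Ω := ⋃ c : ℕ, E1 X A (c + 2) with hU1
  have hcrU : crossEv X A 1 =ᵐ[μ] U1 := by
    filter_upwards [hae] with ω hω
    simp only [eq_iff_iff]
    constructor
    · intro h
      obtain ⟨h2c, hE1⟩ := E1_of_cross hα hω h
      rw [← hA] at h2c hE1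
      refine Set.mem_iUnion.mpr ⟨(cdTimes X A 1 ω).1 - 2, ?_⟩
      rw [show (cdTimes X A 1 ω).1 - 2 + 2 = (cdTimes X A 1 ω).1 by omega]
      exact hE1
    · intro h
      obtain ⟨c, hc⟩ := Set.mem_iUnion.mp h
      exact (E1_spec (by omega) hc).1
  have hE1m : ∀ c : ℕ, MeasurableSet (E1 X A (c + 2)) :=
    fun c => mble_E1 A (by omega) (fun i _ => hmeas i)
  have hdisj : Pairwise (Function.onFun Disjoint (fun c : ℕ => E1 X A (c + 2))) := by
    intro c c' hcc
    apply Set.disjoint_left.mpr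
    intro ω hc hc'
    have e1 := (E1_spec (by omega : 2 ≤ c + 2) hc).2
    have e2 := (E1_spec (by omega : 2 ≤ c' + 2) hc').2
    omega
  have hf := integrable_f hα hmeas hident h1 h2 (μ := μ) 1
  have hmeasure : μ (crossEv X A 1) = ∑' c : ℕ, μ (E1 X A (c + 2)) := by
    rw [measure_congr hcrU, hU1, measure_iUnion hdisj hE1m]
  rw [setIntegral_congr_set hcrU, hU1, integral_iUnion hE1m hdisj hf.integrableOn]
  have hpiece : ∀ c : ℕ, ∫ ω in E1 X A (c + 2), pS X ((cdTimes X A 1 ω).2) ω ∂μ =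
      (μ (E1 X A (c + 2))).toReal * ∑' d : ℕ, Tsum A d := by
    intro c
    have hcong : ∫ ω in E1 X A (c + 2), pS X ((cdTimes X A 1 ω).2) ω ∂μ =
        ∫ ω in E1 X A (c + 2), g X A (c + 2) ω ∂μ := by
      apply setIntegral_congr_ae (hE1m c)
      filter_upwards [hae] with ω hω hE
      obtain ⟨hcr, hfst⟩ := E1_spec (by omega : 2 ≤ c + 2) hE
      have := stau_eq_g hα hω (i := 0) hcr
      rw [← hA] at this
      rwa [hfst] at this
    rw [hcong]
    exact int_g_inter hα hmeas hindep hident h1 h2 (c + 2)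
      (mble_E1 A (by omega) (fun i hi => mble_head_X (c + 2) i hi))
  rw [tsum_congr hpiece, tsum_mul_right, hmeasure,
    ENNReal.tsum_toReal_eq (fun c => measure_ne_top μ _)]

lemma cross2_calc {α : ℤ} (hα : 2 ≤ α) (hmeas : ∀ i, Measurable (X i))
    (hindep : iIndepFun X μ)
    (hident : ∀ i, IdentDistrib (X i) (X 0) μ μ)
    (h1 : μ {ω | X 0 ω = 1} = 2 / 3) (h2 : μ {ω | X 0 ω = -2} = 1 / 3) :
    ∫ ω in crossEv X (α : ℝ) 2, pS X ((cdTimes X (α : ℝ) 2 ω).2) ω ∂μ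
      = (μ (crossEv X (α : ℝ) 2)).toReal * ∑' d : ℕ, Tsum (α : ℝ) d := by
  have hae := ae_NN hmeas hident h1 h2
  have hN2ae : ∀ᵐ ω ∂μ, ω ∈ N2 X (α : ℝ) := by
    rw [ae_iff]
    exact meas_N2_compl hα hmeas hindep hident h1 h2
  set A := (α : ℝ) with hA
  set EE : ℕ × ℕ × ℕ → Set Ω := fun p =>
    E2 X A (p.1 + 2) (p.1 + 2 + 1 + p.2.1) (p.1 + 2 + 1 + p.2.1 + 1 + p.2.2) with hEE
  have hvalid : ∀ p : ℕ × ℕ × ℕ, 2 ≤ p.1 + 2 ∧ p.1 + 2 < p.1 + 2 + 1 + p.2.1 ∧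
      p.1 + 2 + 1 + p.2.1 < p.1 + 2 + 1 + p.2.1 + 1 + p.2.2 := fun p => by omega
  set U2 : Set Ω := ⋃ p : ℕ × ℕ × ℕ, EE p with hU2
  have hcrU : crossEv X A 2 =ᵐ[μ] U2 := by
    filter_upwards [hae, hN2ae] with ω hω hω2
    simp only [eq_iff_iff]
    constructor
    · intro h
      obtain ⟨ha2, hab, hbc, hE2⟩ := E2_of_cross hα hω hω2 h
      rw [← hA] at ha2 hab hbc hE2
      set a := (cdTimes X A 1 ω).1
      set b := (cdTimes X A 1 ω).2
      set c := (cdTimes X A 2 ω).1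
      refine Set.mem_iUnion.mpr ⟨(a - 2, b - a - 1, c - b - 1), ?_⟩
      show ω ∈ E2 X A (a - 2 + 2) (a - 2 + 2 + 1 + (b - a - 1))
        (a - 2 + 2 + 1 + (b - a - 1) + 1 + (c - b - 1))
      rw [show a - 2 + 2 = a by omega]
      rw [show a + 1 + (b - a - 1) = b by omega]
      rw [show b + 1 + (c - b - 1) = c by omega]
      exact hE2
    · intro h
      obtain ⟨p, hp⟩ := Set.mem_iUnion.mp h
      obtain ⟨hv1, hv2, hv3⟩ := hvalid p
      exact (E2_spec hv1 hv2 hv3 hp).1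
  have hE2m : ∀ p : ℕ × ℕ × ℕ, MeasurableSet (EE p) := by
    intro p
    exact mble_E2 A (by omega) (by omega) (by omega) (fun i _ => hmeas i)
  have hdisj : Pairwise (Function.onFun Disjoint EE) := by
    intro p p' hpp
    apply Set.disjoint_left.mpr
    intro ω hp hp'
    obtain ⟨h11, h12, h13⟩ := hvalid p
    obtain ⟨h21, h22, h23⟩ := hvalid p'
    obtain ⟨-, e1, e2⟩ := E2_spec h11 h12 h13 hp
    obtain ⟨-, e1', e2'⟩ := E2_spec h21 h22 h23 hp'
    apply hpp
    have ha : p.1 + 2 = p'.1 + 2 := by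
      have := e1 ▸ e1'
      exact congrArg Prod.fst (e1.symm.trans e1')
    have hb : p.1 + 2 + 1 + p.2.1 = p'.1 + 2 + 1 + p'.2.1 := by
      exact congrArg Prod.snd (e1.symm.trans e1')
    have hc : p.1 + 2 + 1 + p.2.1 + 1 + p.2.2 = p'.1 + 2 + 1 + p'.2.1 + 1 + p'.2.2 :=
      e2.symm.trans e2'
    have : p.1 = p'.1 := by omega
    have h2nd : p.2.1 = p'.2.1 := by omega
    have h3rd : p.2.2 = p'.2.2 := by omega
    exact Prod.ext this (Prod.ext h2nd h3rd)
  have hf := integrable_f hα hmeas hident h1 h2 (μ := μ) 2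
  have hmeasure : μ (crossEv X A 2) = ∑' p : ℕ × ℕ × ℕ, μ (EE p) := by
    rw [measure_congr hcrU, hU2, measure_iUnion hdisj hE2m]
  rw [setIntegral_congr_set hcrU, hU2, integral_iUnion hE2m hdisj hf.integrableOn]
  have hpiece : ∀ p : ℕ × ℕ × ℕ, ∫ ω in EE p, pS X ((cdTimes X A 2 ω).2) ω ∂μ =
      (μ (EE p)).toReal * ∑' d : ℕ, Tsum A d := by
    intro p
    obtain ⟨h11, h12, h13⟩ := hvalid p
    set cc := p.1 + 2 + 1 + p.2.1 + 1 + p.2.2 with hcc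
    have hcong : ∫ ω in EE p, pS X ((cdTimes X A 2 ω).2) ω ∂μ =
        ∫ ω in EE p, g X A cc ω ∂μ := by
      apply setIntegral_congr_ae (hE2m p)
      filter_upwards [hae] with ω hω hE
      obtain ⟨hcr, -, hfst⟩ := E2_spec h11 h12 h13 hE
      have := stau_eq_g hα hω (i := 1) hcr
      rw [← hA] at this
      rwa [hfst] at this
    rw [hcong]
    exact int_g_inter hα hmeas hindep hident h1 h2 cc
      (mble_E2 A (by omega) (by omega) (by omega) (fun i hi => mble_head_X cc i hi))
  rw [tsum_congr hpiece, tsum_mul_right, hmeasure,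
    ENNReal.tsum_toReal_eq (fun p => measure_ne_top μ _)]

end MainCalc

section Positivity

variable {μ : Measure Ω} [IsProbabilityMeasure μ]

lemma cross1_pos {α : ℤ} (hα : 2 ≤ α) (hmeas : ∀ i, Measurable (X i))
    (hindep : iIndepFun X μ)
    (hident : ∀ i, IdentDistrib (X i) (X 0) μ μ)
    (h1 : μ {ω | X 0 ω = 1} = 2 / 3) (h2 : μ {ω | X 0 ω = -2} = 1 / 3) :
    0 < μ (crossEv X (α : ℝ) 1) := by
  set n := α.toNat with hn
  have hn2 : 2 ≤ n := by omega
  have hCpos : 0 < μ (Pev X 0 (fun _ : Fin n => true)) := by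
    rw [meas_Pev hmeas hindep hident h1 h2]
    simp only [pbE, if_true, Finset.prod_const, Finset.card_univ, Fintype.card_fin]
    exact ENNReal.pow_pos (by norm_num) n
  refine lt_of_lt_of_le hCpos (measure_mono ?_)
  intro ω hω
  have hX : ∀ i, i < n → X i ω = 1 := by
    intro i hi
    have := Set.mem_iInter.mp hω ⟨i, hi⟩
    simpa [bval] using this
  have hpS : ∀ t, t ≤ n → pS X t ω = t := by
    intro t ht
    induction t with
    | zero => simp [pS]
    | succ t ih =>
      rw [pS_succ, ih (by omega), hX t (by omega)]
      push_cast
      ring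
  refine ⟨Set.mem_univ ω, ⟨n, ?_, ?_, ?_⟩⟩
  · show (cdTimes X (α : ℝ) 0 ω).2 < n
    have : (cdTimes X (α : ℝ) 0 ω).2 = 0 := rfl
    omega
  · refine (leTau_iff n ω).mpr (Or.inr ⟨?_, ?_⟩)
    · rw [hX 0 (by omega)]; norm_num
    · intro s hs1 hsn
      rw [hpS s (by omega)]
      exact_mod_cast (by omega : 0 < s)
  · rw [hpS n le_rfl, hn]
    have : ((α.toNat : ℕ) : ℝ) = (α : ℝ) := by
      have h' : ((α.toNat : ℕ) : ℤ) = α := Int.toNat_of_nonneg (by omega)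
      exact_mod_cast h'
    rw [this]

lemma T_pos {α : ℤ} (hα : 2 ≤ α) (hmeas : ∀ i, Measurable (X i))
    (hindep : iIndepFun X μ)
    (hident : ∀ i, IdentDistrib (X i) (X 0) μ μ)
    (h1 : μ {ω | X 0 ω = 1} = 2 / 3) (h2 : μ {ω | X 0 ω = -2} = 1 / 3) :
    0 < ∑' d : ℕ, Tsum (α : ℝ) d := by
  have hA2 : (2 : ℝ) ≤ (α : ℝ) := by exact_mod_cast hα
  rw [← int_g_eq_T hα hmeas hindep hident h1 h2 0]
  set C' : Set Ω := {ω | X 0 ω = 1} ∩ {ω | X 1 ω = -2} with hC'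
  have hC'm : MeasurableSet C' :=
    ((hmeas 0) (measurableSet_singleton 1)).inter ((hmeas 1) (measurableSet_singleton (-2)))
  have hval : ∀ ω ∈ C', g X (α : ℝ) 0 ω = (α : ℝ) - 1 := by
    rintro ω ⟨hx0, hx1⟩
    simp only [Set.mem_setOf_eq] at hx0 hx1
    have h01 : pSh X 0 1 ω = 1 := by
      rw [show (1 : ℕ) = 0 + 1 from rfl, pSh_succ]
      simp [pSh, hx0]
    have h02 : pSh X 0 2 ω = -1 := by
      rw [show (2 : ℕ) = 1 + 1 from rfl, pSh_succ, h01, show (0 + 1) = 1 from rfl, hx1]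
      norm_num
    have hfd : fdT X 0 ω = 2 := by
      have hrfl : fdT X 0 ω = sInf {s : ℕ | 0 < s ∧ pSh X 0 s ω < 0} := rfl
      rw [hrfl, sInf_fiber_eq]
      left
      constructor
      · exact ⟨by omega, by rw [h02]; norm_num⟩
      · intro s hs
        interval_cases s
        · simp
        · simp only [Set.mem_setOf_eq, not_and, not_lt]
          intro _
          rw [h01]
          norm_num
    rw [g, hfd, if_neg (by omega), h02]
    ring
  have hnn : 0 ≤ᵐ[μ] g X (α : ℝ) 0 := by
    filter_upwards [ae_NN hmeas hident h1 h2] with ω hω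
    exact (g_bounds hA2 hω 0).1
  have hintg := integrable_g hα hmeas hident h1 h2 (μ := μ) 0
  have hle := setIntegral_le_integral (s := C') hintg hnn
  have hC'val : ∫ ω in C', g X (α : ℝ) 0 ω ∂μ = ((α : ℝ) - 1) * (μ C').toReal := by
    rw [setIntegral_congr_fun hC'm hval, setIntegral_const, smul_eq_mul, mul_comm, measureReal_def]
  have hμC' : μ C' = 2 / 3 * (1 / 3) := by
    have hIF : IndepFun (X 0) (X 1) μ := hindep.indepFun (by norm_num : (0 : ℕ) ≠ 1)
    have := (indepFun_iff_measure_inter_preimage_eq_mul.mp hIF) {1} {-2}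
      (measurableSet_singleton 1) (measurableSet_singleton (-2))
    have heq : C' = X 0 ⁻¹' {1} ∩ X 1 ⁻¹' {-2} := rfl
    rw [heq, this]
    have e1 : μ (X 0 ⁻¹' {1}) = 2 / 3 := h1
    have e2 : μ (X 1 ⁻¹' {-2}) = 1 / 3 := by
      have := prob_val hmeas hident 1 (-2)
      rw [show (X 1 ⁻¹' {-2} : Set Ω) = {ω | X 1 ω = -2} from rfl, this, h2]
    rw [e1, e2]
  have hpos : 0 < ((α : ℝ) - 1) * (μ C').toReal := by
    apply mul_pos (by linarith)
    rw [hμC', ENNReal.toReal_mul]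
    norm_num [ENNReal.toReal_div]
  calc (0 : ℝ) < ((α : ℝ) - 1) * (μ C').toReal := hpos
  _ = ∫ ω in C', g X (α : ℝ) 0 ω ∂μ := hC'val.symm
  _ ≤ ∫ ω, g X (α : ℝ) 0 ω ∂μ := hle

end Positivity



end S16

/-- For the random walk whose step takes the value `1` with probability
`2/3` and the value `-2` with probability `1/3`, for every integer level `α ≥ 2`:
conditionally on `𝔄_i(α)` one has `S_{t_i(α) - 1} = α - 1` almost surely; moreover
`E[S_{τ₁(α)} ∣ 𝔄₁(α)] > 0` and, when `P(𝔄₂(α)) > 0`,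
`E[S_{τ₂(α)} ∣ 𝔄₂(α)] = E[S_{τ₁(α)} ∣ 𝔄₁(α)]`. -/
theorem stmt16 (μ : Measure Ω) [IsProbabilityMeasure μ]
    (X : ℕ → Ω → ℝ) (hmeas : ∀ i, Measurable (X i))
    (hindep : iIndepFun X μ)
    (hident : ∀ i, IdentDistrib (X i) (X 0) μ μ)
    (h1 : μ {ω | X 0 ω = 1} = 2 / 3) (h2 : μ {ω | X 0 ω = -2} = 1 / 3) :
    ∀ α : ℤ, 2 ≤ α →
      (∀ i : ℕ, 1 ≤ i → 0 < μ (crossEv X (α : ℝ) i) →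
        ∀ᵐ ω ∂μ, ω ∈ crossEv X (α : ℝ) i →
          pS X ((cdTimes X (α : ℝ) i ω).1 - 1) ω = (α : ℝ) - 1) ∧
      0 < cexp μ (crossEv X (α : ℝ) 1) (fun ω => pS X ((cdTimes X (α : ℝ) 1 ω).2) ω) ∧
      (0 < μ (crossEv X (α : ℝ) 2) →
        cexp μ (crossEv X (α : ℝ) 2) (fun ω => pS X ((cdTimes X (α : ℝ) 2 ω).2) ω) =
          cexp μ (crossEv X (α : ℝ) 1) (fun ω => pS X ((cdTimes X (α : ℝ) 1 ω).2) ω)) := by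
  intro α hα
  refine ⟨?_, ?_, ?_⟩
  · intro i hi _hpos
    obtain ⟨i', rfl⟩ : ∃ i', i = i' + 1 := ⟨i - 1, by omega⟩
    filter_upwards [S16.ae_NN hmeas hident h1 h2] with ω hω hcr
    exact (S16.cross_struct hα hω hcr).2.2.2.1
  · have hpos := S16.cross1_pos hα hmeas hindep hident h1 h2
    have hm : (μ (crossEv X (α : ℝ) 1)).toReal ≠ 0 :=
      ENNReal.toReal_ne_zero.mpr ⟨hpos.ne', measure_ne_top μ _⟩
    rw [cexp, S16.cross1_calc hα hmeas hindep hident h1 h2, mul_comm, mul_div_assoc,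
      div_self hm, mul_one]
    exact S16.T_pos hα hmeas hindep hident h1 h2
  · intro hpos2
    have hpos1 := S16.cross1_pos hα hmeas hindep hident h1 h2
    have hm1 : (μ (crossEv X (α : ℝ) 1)).toReal ≠ 0 :=
      ENNReal.toReal_ne_zero.mpr ⟨hpos1.ne', measure_ne_top μ _⟩
    have hm2 : (μ (crossEv X (α : ℝ) 2)).toReal ≠ 0 :=
      ENNReal.toReal_ne_zero.mpr ⟨hpos2.ne', measure_ne_top μ _⟩
    rw [cexp, cexp, S16.cross1_calc hα hmeas hindep hident h1 h2,
      S16.cross2_calc hα hmeas hindep hident h1 h2, mul_comm, mul_div_assoc, div_self hm2,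
      mul_one, mul_comm, mul_div_assoc, div_self hm1, mul_one]

end
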